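/- arXiv:2410.22034 — 3 statements merged into one kernel-verified Lean document; each statement's English description precedes it below -/
import Mathlib

section
/- Let g be a gauge function of lower order than the identity, and let A ⊆ ℕ satisfy |A ∩ n| ≤ log₂( g(2^{-n}) / 2^{-n} ) for all but finitely many n (equivalently, 2^{-n + |A ∩ n|} ≤ g(2^{-n}) for all but finitely many n). Then for every y : 2^{<ω} → 2 and every Borel set B ⊆ [T_{A,y}] with μ_{A,y}(B) > 0, we have H^g(B) > 0. -/
open MeasureTheory Filter Set Topology
open scoped ENNReal

noncomputable section

/-- Cantor space `2^ω`: infinite binary sequences with the metric `d(x,y) = 2^{-n}`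
where `n` is the least index at which `x` and `y` differ (and `d(x,x) = 0`). -/
abbrev Cantor := ℕ → Bool

/-- The metric `d(x,y) = (1/2)^n`, `n` least with `x n ≠ y n`. -/
instance : MetricSpace Cantor := PiNat.metricSpace

/-- A gauge function `g : [0,∞) → [0,∞)`: increasing, continuous on the right,
`g 0 = 0`, and `g t > 0` for `t > 0`.  (Modelled on `ℝ`, with all conditions
imposed on `[0,∞)`.) -/
structure IsGauge (g : ℝ → ℝ) : Prop where
  mono : MonotoneOn g (Set.Ici 0)
  zero : g 0 = 0
  pos : ∀ t > 0, 0 < g t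
  rightCont : ∀ t ≥ 0, ContinuousWithinAt g (Set.Ici t) t

/-- The gauge measure `H^g` on a metric space: the Borel measure obtained from covers by
sets of small diameter, with each set of diameter `d` weighted by `g d`. -/
def gaugeMeasure {X : Type*} [EMetricSpace X] [MeasurableSpace X] [BorelSpace X]
    (g : ℝ → ℝ) : Measure X :=
  Measure.mkMetric (fun d => ENNReal.ofReal (g d.toReal))

/-- `g` has lower order than the identity: `g(t)/t → ∞` as `t → 0⁺`. -/
def LowerOrderThanId (g : ℝ → ℝ) : Prop :=
  Tendsto (fun t => g t / t) (𝓝[>] (0 : ℝ)) atTop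

/-- The cylinder set `[t] = {x ∈ 2^ω : x ⊃ t}` determined by a finite binary string `t`. -/
def cylinder (t : List Bool) : Set Cantor :=
  {x : Cantor | ∀ i, i < t.length → x i = t.getD i false}

/-- Membership in the tree `T_{A,y}`: `t ∈ T_{A,y}` iff for all `n < |t|`,
if `n ∈ A` then `t(n) = y(t↾n)`. -/
def inTree (A : Set ℕ) (y : List Bool → Bool) (t : List Bool) : Prop :=
  ∀ n ∈ A, n < t.length → t.getD n false = y (t.take n)

/-- The set `[T_{A,y}]` of infinite branches of the tree `T_{A,y}`. -/
def branches (A : Set ℕ) (y : List Bool → Bool) : Set Cantor :=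
  {x : Cantor | ∀ n ∈ A, x n = y ((List.range n).map x)}

/-- `μ` is the uniform measure `μ_{A,y}` on `[T_{A,y}]`: the Borel probability measure
concentrated on `[T_{A,y}]` giving each cylinder `[t]`, for `t ∈ T_{A,y}` of length `n`,
measure `2^{-n + |A ∩ n|}`. -/
structure IsUniformTreeMeasure (A : Set ℕ) (y : List Bool → Bool) (μ : Measure Cantor) :
    Prop where
  prob : IsProbabilityMeasure μ
  full : μ (branches A y) = 1
  cylMeas : ∀ t : List Bool, inTree A y t →
    μ (cylinder t) = (2 : ℝ≥0∞)⁻¹ ^ (t.length - (A ∩ Set.Iio t.length).ncard)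

/- ---------------- auxiliary lemmas ---------------- -/

lemma mapRange_getD (x : Cantor) {m i : ℕ} (h : i < m) :
    ((List.range m).map x).getD i false = x i := by
  rw [List.getD_eq_getElem _ _ (by simpa using h)]
  simp

lemma mapRange_take (x : Cantor) {m n : ℕ} (h : n ≤ m) :
    ((List.range m).map x).take n = (List.range n).map x := by
  rw [← List.map_take, List.take_range, Nat.min_eq_left h]

lemma cylinder_eq_piNat (x : Cantor) (m : ℕ) :
    _root_.cylinder ((List.range m).map x) = PiNat.cylinder x m := by
  ext u
  simp only [_root_.cylinder, PiNat.cylinder, Set.mem_setOf_eq]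
  constructor
  · intro h i hi
    have hi' : i < ((List.range m).map x).length := by simpa using hi
    rw [h i hi', mapRange_getD x hi]
  · intro h i hi
    simp only [List.length_map, List.length_range] at hi
    rw [mapRange_getD x hi]
    exact h i hi

lemma inTree_res {A : Set ℕ} {y : List Bool → Bool} {x : Cantor}
    (hx : x ∈ branches A y) (m : ℕ) : inTree A y ((List.range m).map x) := by
  intro n hn hlt
  simp only [List.length_map, List.length_range] at hlt
  rw [mapRange_getD x hlt, mapRange_take x hlt.le]
  exact hx n hn

lemma branches_isClosed (A : Set ℕ) (y : List Bool → Bool) :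
    IsClosed (branches A y) := by
  rw [← isOpen_compl_iff, isOpen_iff_forall_mem_open]
  intro x hx
  simp only [branches, Set.mem_compl_iff, Set.mem_setOf_eq] at hx
  push_neg at hx
  obtain ⟨n, hnA, hne⟩ := hx
  refine ⟨PiNat.cylinder x (n + 1), ?_, PiNat.isOpen_cylinder (fun _ => Bool) x (n + 1),
    PiNat.self_mem_cylinder x (n + 1)⟩
  intro u hu
  simp only [Set.mem_compl_iff, branches, Set.mem_setOf_eq]
  push_neg
  refine ⟨n, hnA, ?_⟩
  have h1 : u n = x n := hu n (Nat.lt_succ_self n)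
  have h2 : (List.range n).map u = (List.range n).map x := by
    apply List.map_congr_left
    intro a ha
    exact hu a (Nat.lt_succ_of_lt (List.mem_range.mp ha))
  rw [h1, h2]
  exact hne

lemma ncard_inter_Iio_le (A : Set ℕ) (m : ℕ) : (A ∩ Set.Iio m).ncard ≤ m := by
  have h1 : (A ∩ Set.Iio m).ncard ≤ (Set.Iio m).ncard :=
    Set.ncard_le_ncard Set.inter_subset_right (Set.finite_Iio m)
  have h2 : (Set.Iio m).ncard = m := by
    rw [← Finset.coe_Iio, Set.ncard_coe_finset, Nat.card_Iio]
  omega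

lemma two_zpow_neg_eq (k : ℕ) : (2 : ℝ) ^ (-(k : ℤ)) = (2⁻¹ : ℝ) ^ k := by
  rw [zpow_neg, zpow_natCast, inv_pow]

lemma inv_two_pow_eq_ofReal (m c : ℕ) (h : c ≤ m) :
    (2 : ℝ≥0∞)⁻¹ ^ (m - c) = ENNReal.ofReal ((2 : ℝ) ^ (-(m : ℤ) + c)) := by
  have h1 : ((2 : ℝ) ^ (-(m : ℤ) + c)) = (2⁻¹ : ℝ) ^ (m - c) := by
    rw [← zpow_natCast (2⁻¹ : ℝ) (m - c), inv_zpow, ← zpow_neg]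
    congr 1
    push_cast [Nat.cast_sub h]
    ring
  rw [h1, ENNReal.ofReal_pow (by norm_num)]
  congr 1
  rw [ENNReal.ofReal_inv_of_pos (by norm_num)]
  norm_num

lemma mu_cylinder {A : Set ℕ} {y : List Bool → Bool} {μ : Measure Cantor}
    (hμ : IsUniformTreeMeasure A y μ) {x : Cantor} (hx : x ∈ branches A y) (m : ℕ) :
    μ (PiNat.cylinder x m) = (2 : ℝ≥0∞)⁻¹ ^ (m - (A ∩ Set.Iio m).ncard) := by
  rw [← cylinder_eq_piNat]
  have := hμ.cylMeas _ (inTree_res hx m)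
  simpa using this

/-- If `g` is a gauge of lower order than the identity and `A ⊆ ℕ` satisfies
`2^{-n+|A∩n|} ≤ g(2^{-n})` for all but finitely many `n`, then for every `y` and every
Borel `B ⊆ [T_{A,y}]` with `μ_{A,y}(B) > 0` we have `H^g(B) > 0`. -/
theorem sparse_tree_positive_gauge (g : ℝ → ℝ) (hg : IsGauge g)
    (hlo : LowerOrderThanId g) (A : Set ℕ)
    (hA : ∀ᶠ n : ℕ in atTop,
      (2 : ℝ) ^ (-(n : ℤ) + ((A ∩ Set.Iio n).ncard : ℤ)) ≤ g ((2 : ℝ) ^ (-(n : ℤ))))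
    (y : List Bool → Bool) (μ : Measure Cantor) (hμ : IsUniformTreeMeasure A y μ)
    (B : Set Cantor) (hBm : MeasurableSet B) (hBsub : B ⊆ branches A y)
    (hB : 0 < μ B) :
    0 < gaugeMeasure g B := by
  classical
  haveI := hμ.prob
  obtain ⟨N, hN⟩ := eventually_atTop.1 hA
  have hbm : MeasurableSet (branches A y) := (branches_isClosed A y).measurableSet
  have hcompl : μ (branches A y)ᶜ = 0 := by
    rw [measure_compl hbm (measure_ne_top μ _), hμ.full, measure_univ]
    simp
  -- g((1/2)^m) → 0
  have hg0 : Tendsto (fun m : ℕ => g ((2⁻¹ : ℝ) ^ m)) atTop (𝓝 0) := by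
    have h1 : Tendsto (fun m : ℕ => (2⁻¹ : ℝ) ^ m) atTop (𝓝[Set.Ici 0] 0) := by
      apply tendsto_nhdsWithin_of_tendsto_nhds_of_eventually_within
      · exact tendsto_pow_atTop_nhds_zero_of_lt_one (by norm_num) (by norm_num)
      · exact Filter.Eventually.of_forall fun m => Set.mem_Ici.mpr (by positivity)
    have h2 : Tendsto g (𝓝[Set.Ici 0] 0) (𝓝 0) := by
      have := hg.rightCont 0 le_rfl
      rwa [ContinuousWithinAt, hg.zero] at this
    exact h2.comp h1
  -- singletons are null
  have hatom : ∀ x : Cantor, μ {x} = 0 := by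
    intro x
    by_cases hx : x ∈ branches A y
    · have key : ∀ m ≥ N, μ {x} ≤ ENNReal.ofReal (g ((2⁻¹ : ℝ) ^ m)) := by
        intro m hm
        have hc := ncard_inter_Iio_le A m
        calc μ {x} ≤ μ (PiNat.cylinder x m) :=
              measure_mono (Set.singleton_subset_iff.mpr (PiNat.self_mem_cylinder x m))
          _ = (2 : ℝ≥0∞)⁻¹ ^ (m - (A ∩ Set.Iio m).ncard) := mu_cylinder hμ hx m
          _ = ENNReal.ofReal ((2 : ℝ) ^ (-(m : ℤ) + (A ∩ Set.Iio m).ncard)) :=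
              inv_two_pow_eq_ofReal _ _ hc
          _ ≤ ENNReal.ofReal (g ((2 : ℝ) ^ (-(m : ℤ)))) :=
              ENNReal.ofReal_le_ofReal (hN m hm)
          _ = ENNReal.ofReal (g ((2⁻¹ : ℝ) ^ m)) := by rw [two_zpow_neg_eq]
      have h2 : Tendsto (fun m : ℕ => ENNReal.ofReal (g ((2⁻¹ : ℝ) ^ m))) atTop (𝓝 0) := by
        have := ENNReal.tendsto_ofReal hg0
        simpa using this
      have h3 : μ {x} ≤ 0 := ge_of_tendsto h2 (eventually_atTop.2 ⟨N, key⟩)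
      exact le_antisymm h3 (zero_le)
    · have : ({x} : Set Cantor) ⊆ (branches A y)ᶜ := by
        intro u hu
        simp only [Set.mem_singleton_iff] at hu
        subst hu
        exact hx
      exact le_antisymm ((measure_mono this).trans hcompl.le) (zero_le)
  -- the main estimate
  have hbound : ∀ s : Set Cantor, EMetric.diam s ≤ (2 : ℝ≥0∞)⁻¹ ^ N →
      μ s ≤ 2 * ENNReal.ofReal (g (EMetric.diam s).toReal) := by
    intro s hs
    by_cases hsb : (s ∩ branches A y).Nonempty
    swap
    · have hsub : s ⊆ (branches A y)ᶜ := by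
        intro u hu
        by_contra h
        exact hsb ⟨u, hu, not_not.mp h⟩
      have : μ s = 0 := le_antisymm ((measure_mono hsub).trans hcompl.le) (zero_le)
      rw [this]
      exact zero_le
    obtain ⟨x, hxs, hxb⟩ := hsb
    by_cases hss : s.Subsingleton
    · have hsub : s ⊆ {x} := fun u hu => hss hu hxs
      have : μ s = 0 := le_antisymm ((measure_mono hsub).trans (hatom x).le) (zero_le)
      rw [this]
      exact zero_le
    have hnt : s.Nontrivial := Set.not_subsingleton_iff.mp hss
    have hdpos : 0 < EMetric.diam s := EMetric.diam_pos_iff.mpr hnt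
    obtain ⟨k, hk⟩ := ENNReal.exists_inv_two_pow_lt hdpos.ne'
    have hex : ∃ j : ℕ, (2 : ℝ≥0∞)⁻¹ ^ j < EMetric.diam s := ⟨k, hk⟩
    set K := Nat.find hex with hKdef
    have hK : (2 : ℝ≥0∞)⁻¹ ^ K < EMetric.diam s := Nat.find_spec hex
    have hNK : N < K := by
      by_contra h
      push_neg at h
      have h1 : (2 : ℝ≥0∞)⁻¹ ^ N ≤ (2 : ℝ≥0∞)⁻¹ ^ K :=
        pow_le_pow_of_le_one (zero_le) (by norm_num) h
      exact absurd ((hK.trans_le hs).trans_le h1) (lt_irrefl _)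
    set m := K - 1 with hmdef
    have hmN : N ≤ m := by omega
    have hm1 : m + 1 = K := by omega
    have hdle : EMetric.diam s ≤ (2 : ℝ≥0∞)⁻¹ ^ m := by
      have := Nat.find_min hex (show m < K by omega)
      exact not_lt.mp this
    have hdgt : (2 : ℝ≥0∞)⁻¹ ^ (m + 1) < EMetric.diam s := by rw [hm1]; exact hK
    have hpowt : ((2 : ℝ≥0∞)⁻¹ ^ m) ≠ ⊤ :=
      ENNReal.pow_ne_top (ENNReal.inv_ne_top.mpr (by norm_num))
    have hdnet : EMetric.diam s ≠ ⊤ := (hdle.trans_lt hpowt.lt_top).ne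
    -- s is contained in the cylinder of x of length m
    have hsc : s ⊆ PiNat.cylinder x m := by
      intro u hu
      rw [PiNat.mem_cylinder_iff_dist_le]
      have h1 : edist u x ≤ (2 : ℝ≥0∞)⁻¹ ^ m :=
        (EMetric.edist_le_diam_of_mem hu hxs).trans hdle
      have h2 := ENNReal.toReal_mono hpowt h1
      rw [← dist_edist] at h2
      calc dist u x ≤ ((2 : ℝ≥0∞)⁻¹ ^ m).toReal := h2
        _ = (1 / 2 : ℝ) ^ m := by
            simp [ENNReal.toReal_pow, ENNReal.toReal_inv]
    -- diameter lower bound, in ℝ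
    have hdr : (2⁻¹ : ℝ) ^ (m + 1) ≤ (EMetric.diam s).toReal := by
      have h1 := ENNReal.toReal_mono hdnet hdgt.le
      calc (2⁻¹ : ℝ) ^ (m + 1) = ((2 : ℝ≥0∞)⁻¹ ^ (m + 1)).toReal := by
            simp [ENNReal.toReal_pow, ENNReal.toReal_inv]
        _ ≤ _ := h1
    set c := (A ∩ Set.Iio m).ncard with hcdef
    have hc : c ≤ m := ncard_inter_Iio_le A m
    have hc' : c ≤ (A ∩ Set.Iio (m + 1)).ncard := by
      apply Set.ncard_le_ncard
      · exact Set.inter_subset_inter_right _ (Set.Iio_subset_Iio (Nat.le_succ m))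
      · exact Set.Finite.inter_of_right (Set.finite_Iio (m + 1)) A
    have hμs : μ s ≤ ENNReal.ofReal ((2 : ℝ) ^ (-(m : ℤ) + c)) := by
      calc μ s ≤ μ (PiNat.cylinder x m) := measure_mono hsc
        _ = (2 : ℝ≥0∞)⁻¹ ^ (m - c) := mu_cylinder hμ hxb m
        _ = ENNReal.ofReal ((2 : ℝ) ^ (-(m : ℤ) + c)) := inv_two_pow_eq_ofReal m c hc
    have hgb : (2 : ℝ) ^ (-(m : ℤ) + c) ≤ 2 * g ((EMetric.diam s).toReal) := by
      have h1 := hN (m + 1) (by omega)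
      have h2 : g ((2 : ℝ) ^ (-((m + 1 : ℕ) : ℤ))) ≤ g ((EMetric.diam s).toReal) := by
        apply hg.mono
        · exact Set.mem_Ici.mpr (by positivity)
        · exact Set.mem_Ici.mpr (ENNReal.toReal_nonneg)
        · rw [two_zpow_neg_eq]
          exact hdr
      have h3 : (2 : ℝ) ^ (-((m + 1 : ℕ) : ℤ) + ((A ∩ Set.Iio (m + 1)).ncard : ℤ)) ≥
          (2 : ℝ) ^ (-((m + 1 : ℕ) : ℤ) + (c : ℤ)) := by
        apply zpow_le_zpow_right₀ (by norm_num)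
        omega
      have h4 : (2 : ℝ) ^ (-(m : ℤ) + c) = 2 * (2 : ℝ) ^ (-((m + 1 : ℕ) : ℤ) + (c : ℤ)) := by
        rw [mul_comm, ← zpow_add_one₀ (by norm_num : (2 : ℝ) ≠ 0)]
        congr 1
        push_cast
        ring
      rw [h4]
      have := (h3.trans h1).trans h2
      linarith
    refine hμs.trans ?_
    calc ENNReal.ofReal ((2 : ℝ) ^ (-(m : ℤ) + c))
        ≤ ENNReal.ofReal (2 * g ((EMetric.diam s).toReal)) := ENNReal.ofReal_le_ofReal hgb
      _ = 2 * ENNReal.ofReal (g ((EMetric.diam s).toReal)) := by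
          rw [ENNReal.ofReal_mul (by norm_num)]
          norm_num
  -- mass distribution principle
  have hle : (2⁻¹ : ℝ≥0∞) • μ ≤ gaugeMeasure g := by
    apply Measure.le_mkMetric _ _ ((2 : ℝ≥0∞)⁻¹ ^ N)
    · exact ENNReal.pow_pos (by norm_num) N
    · intro s hs
      have h1 := hbound s hs
      rw [Measure.smul_apply, smul_eq_mul]
      calc (2⁻¹ : ℝ≥0∞) * μ s ≤ 2⁻¹ * (2 * ENNReal.ofReal (g (EMetric.diam s).toReal)) :=
            mul_le_mul_right h1 _
        _ = ENNReal.ofReal (g (EMetric.diam s).toReal) := by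
            rw [← mul_assoc, ENNReal.inv_mul_cancel (by norm_num) (by norm_num), one_mul]
  have h2 := Measure.le_iff'.mp hle B
  rw [Measure.smul_apply, smul_eq_mul] at h2
  have hpos : 0 < (2⁻¹ : ℝ≥0∞) * μ B := ENNReal.mul_pos (by norm_num) hB.ne'
  exact hpos.trans_le h2
end
end

section
/- Let (X₁,d₁) and (X₂,d₂) be metric spaces, let g be a gauge function, let h : [0,∞) → [0,∞) be continuous and strictly increasing with h(0) = 0, and let k ∈ ℕ. Suppose f : X₁ → X₂ has the property that for every set A ⊆ X₁, the image f(A) can be covered by at most k sets of d₂-diameter at most h(diam_{d₁}(A)). Then for every set B ⊆ X₁, H^{g∘h^{-1}}(f(B)) ≤ k · H^g(B), where h^{-1} is the inverse function of h. -/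
open MeasureTheory Filter Set Topology
open scoped ENNReal

noncomputable section

/-- If `f : X₁ → X₂` is such that the image of every (bounded) set `A` can be covered by at
most `k` sets of diameter at most `h(diam A)`, where `h` is continuous, strictly increasing
with `h 0 = 0` (and maps `[0,∞)` onto `[0,∞)`, with inverse `hinv`), then
`H^{g ∘ h⁻¹}(f(B)) ≤ k · H^g(B)` for every `B`. -/
theorem gauge_measure_image_le {X₁ X₂ : Type*}
    [MetricSpace X₁] [MeasurableSpace X₁] [BorelSpace X₁]
    [MetricSpace X₂] [MeasurableSpace X₂] [BorelSpace X₂]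
    (g : ℝ → ℝ) (hg : IsGauge g)
    (h hinv : ℝ → ℝ)
    (hcont : ContinuousOn h (Set.Ici 0)) (hmono : StrictMonoOn h (Set.Ici 0))
    (h0 : h 0 = 0) (hsurj : Set.SurjOn h (Set.Ici 0) (Set.Ici 0))
    (hinv_h : ∀ t ≥ (0 : ℝ), hinv (h t) = t)
    (k : ℕ) (f : X₁ → X₂)
    (hcov : ∀ A : Set X₁, EMetric.diam A ≠ ⊤ → ∃ c : Fin k → Set X₂,
      f '' A ⊆ ⋃ i, c i ∧
      ∀ i, EMetric.diam (c i) ≤ ENNReal.ofReal (h (EMetric.diam A).toReal))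
    (B : Set X₁) :
    gaugeMeasure (g ∘ hinv) (f '' B) ≤ (k : ℝ≥0∞) * gaugeMeasure g B := by
  classical
  rcases Set.eq_empty_or_nonempty (f '' B) with hB | hB
  · simp [hB]
  obtain ⟨y, x, hxB, rfl⟩ := hB
  have hk : k ≠ 0 := by
    rintro rfl
    obtain ⟨c, hc, -⟩ := hcov {x} (by show Metric.ediam ({x} : Set X₁) ≠ ⊤; rw [Metric.ediam_singleton]; exact ENNReal.zero_ne_top)
    simpa using hc ⟨x, rfl, rfl⟩
  haveI : NeZero k := ⟨hk⟩
  have hkt : (k : ℝ≥0∞) ≠ ⊤ := ENNReal.natCast_ne_top k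
  have hk0 : (k : ℝ≥0∞) ≠ 0 := Nat.cast_ne_zero.mpr hk
  have hmonoOn : MonotoneOn h (Set.Ici 0) := hmono.monotoneOn
  have hnonneg : ∀ a : ℝ, 0 ≤ a → 0 ≤ h a := fun a ha => by
    rw [← h0]; exact hmonoOn Set.self_mem_Ici ha ha
  simp only [gaugeMeasure]
  rw [Measure.mkMetric_apply, Measure.mkMetric_apply]
  refine iSup₂_le fun r' hr' => ?_
  set r'' := min r' 1 with hr''def
  have hr''pos : 0 < r'' := lt_min hr' zero_lt_one
  have hr''top : r'' ≠ ⊤ := ((min_le_right _ _).trans_lt ENNReal.one_lt_top).ne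
  have hr''real : 0 < r''.toReal := ENNReal.toReal_pos hr''pos.ne' hr''top
  have hev : ∀ᶠ s in 𝓝[Set.Ici (0:ℝ)] 0, h s < r''.toReal := by
    have hc0 : ContinuousWithinAt h (Set.Ici 0) 0 := hcont 0 Set.self_mem_Ici
    have h2 := hc0.tendsto
    rw [h0] at h2
    exact h2 (Iio_mem_nhds hr''real)
  obtain ⟨ε0, hε0pos, hε0⟩ := Metric.mem_nhdsWithin_iff.mp hev
  set ε : ℝ≥0∞ := ENNReal.ofReal (ε0 / 2) with hεdef
  have hεpos : 0 < ε := ENNReal.ofReal_pos.mpr (by linarith)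
  have hεtop : ε ≠ ⊤ := ENNReal.ofReal_ne_top
  have hsmall : ∀ a : ℝ, 0 ≤ a → a ≤ ε0 / 2 → ENNReal.ofReal (h a) ≤ r' := by
    intro a ha hale
    have hmem : a ∈ Metric.ball (0:ℝ) ε0 ∩ Set.Ici 0 :=
      ⟨Metric.mem_ball.mpr (by rw [Real.dist_eq, sub_zero, abs_of_nonneg ha]; linarith), ha⟩
    have hlt : h a < r''.toReal := hε0 hmem
    calc ENNReal.ofReal (h a) ≤ ENNReal.ofReal r''.toReal := ENNReal.ofReal_le_ofReal hlt.le
      _ = r'' := ENNReal.ofReal_toReal hr''top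
      _ ≤ r' := min_le_left _ _
  refine le_trans ?_ (mul_le_mul_right (le_iSup₂_of_le ε hεpos le_rfl) _)
  rw [ENNReal.mul_iInf_of_ne hk0 hkt]
  refine le_iInf fun t => ?_
  rw [ENNReal.mul_iInf_of_ne hk0 hkt]
  refine le_iInf fun htB => ?_
  rw [ENNReal.mul_iInf_of_ne hk0 hkt]
  refine le_iInf fun htε => ?_
  -- construct the cover of `f '' B`
  set A : ℕ → Set X₁ := fun n => t n ∩ B with hA
  have hAsub : ∀ n, A n ⊆ t n := fun n => Set.inter_subset_left
  have hAdiam : ∀ n, EMetric.diam (A n) ≤ ε := fun n =>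
    (EMetric.diam_mono (hAsub n)).trans (htε n)
  have hAne : ∀ n, EMetric.diam (A n) ≠ ⊤ := fun n =>
    ((hAdiam n).trans_lt (lt_top_iff_ne_top.mpr hεtop)).ne
  choose c hc hcd using fun n => hcov (A n) (hAne n)
  set c' : ℕ → Fin k → Set X₂ := fun n i => c n i ∩ f '' A n with hc'def
  set e := Nat.divModEquiv k with he
  set u : ℕ → Set X₂ := fun j => c' (e j).1 (e j).2 with hu
  have hc'd : ∀ n i, EMetric.diam (c' n i) ≤ ENNReal.ofReal (h (EMetric.diam (A n)).toReal) :=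
    fun n i => (EMetric.diam_mono Set.inter_subset_left).trans (hcd n i)
  have hudiam : ∀ j, EMetric.diam (u j) ≤ r' := by
    intro j
    refine (hc'd _ _).trans (hsmall _ ENNReal.toReal_nonneg ?_)
    exact ENNReal.toReal_le_of_le_ofReal (by linarith) (hAdiam (e j).1)
  refine iInf₂_le_of_le u ?_ (iInf_le_of_le hudiam ?_)
  · rintro z ⟨w, hwB, rfl⟩
    obtain ⟨n, hn⟩ := Set.mem_iUnion.mp (htB hwB)
    have hwA : w ∈ A n := ⟨hn, hwB⟩
    obtain ⟨i, hi⟩ := Set.mem_iUnion.mp (hc n ⟨w, hwA, rfl⟩)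
    refine Set.mem_iUnion.mpr ⟨e.symm (n, i), ?_⟩
    show f w ∈ u (e.symm (n, i))
    have heq : u (e.symm (n, i)) = c' n i := by
      rw [hu]; simp only [Equiv.apply_symm_apply]
    rw [heq]
    exact ⟨hi, w, hwA, rfl⟩
  · -- sum estimate
    set F : ℕ → ℝ≥0∞ := fun n =>
      ⨆ _ : (t n).Nonempty, ENNReal.ofReal (g (EMetric.diam (t n)).toReal) with hF
    have key : ∀ j, (⨆ _ : (u j).Nonempty, ENNReal.ofReal ((g ∘ hinv) (EMetric.diam (u j)).toReal))
        ≤ F (e j).1 := by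
      intro j
      set n := (e j).1
      refine iSup_le fun hne => ?_
      obtain ⟨z, _, w, hwA, rfl⟩ := hne
      have htne : (t n).Nonempty := ⟨w, hAsub n hwA⟩
      refine le_iSup_of_le htne ?_
      -- value estimate
      have hDtfin : EMetric.diam (t n) ≠ ⊤ := ((htε n).trans_lt (lt_top_iff_ne_top.mpr hεtop)).ne
      set a : ℝ := (EMetric.diam (A n)).toReal with ha
      have ha0 : 0 ≤ a := ENNReal.toReal_nonneg
      set s : ℝ := (EMetric.diam (u j)).toReal with hs
      have hs0 : 0 ≤ s := ENNReal.toReal_nonneg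
      have hsh : s ≤ h a :=
        ENNReal.toReal_le_of_le_ofReal (hnonneg a ha0) (hc'd n (e j).2)
      obtain ⟨w', hw', hw's⟩ : s ∈ h '' Set.Icc 0 a := by
        apply intermediate_value_Icc ha0 (hcont.mono (Set.Icc_subset_Ici_self))
        rw [h0]
        exact ⟨hs0, hsh⟩
      have hinvs : hinv s = w' := by rw [← hw's, hinv_h w' hw'.1]
      have hale : a ≤ (EMetric.diam (t n)).toReal :=
        ENNReal.toReal_mono hDtfin (EMetric.diam_mono (hAsub n))
      have : g (hinv s) ≤ g (EMetric.diam (t n)).toReal := by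
        rw [hinvs]
        exact hg.mono hw'.1 (le_trans ha0 hale) (hw'.2.trans hale)
      exact ENNReal.ofReal_le_ofReal this
    calc
      (∑' j, ⨆ _ : (u j).Nonempty,
          ENNReal.ofReal ((g ∘ hinv) (EMetric.diam (u j)).toReal))
          ≤ ∑' j, F (e j).1 := ENNReal.tsum_le_tsum key
      _ = ∑' p : ℕ × Fin k, F p.1 := e.tsum_eq (fun p : ℕ × Fin k => F p.1)
      _ = ∑' n, ∑' _ : Fin k, F n := ENNReal.tsum_prod (f := fun n (_ : Fin k) => F n)
      _ = ∑' n, (k : ℝ≥0∞) * F n := by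
          congr 1
          funext n
          rw [tsum_fintype]
          simp [Finset.sum_const, nsmul_eq_mul]
      _ = (k : ℝ≥0∞) * ∑' n, F n := ENNReal.tsum_mul_left
end
end

section
/- For every n ≥ 1 there is a Borel bijection f : 2^ω → [0,1]^n such that for every set A ⊆ 2^ω and every gauge function g, H^g(A) > 0 if and only if H^{g∘h^{-1}}(f(A)) > 0, where h(t) = t^{1/n} (so g∘h^{-1}(t) = g(t^n)). Here [0,1]^n carries the Euclidean metric and 2^ω the metric d(x,y) = 2^{-n} for n the least differing bit. -/
open MeasureTheory Filter Set Topology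
open scoped ENNReal

noncomputable section

/-- The unit cube `[0,1]^n` inside `ℝ^n` with the Euclidean metric. -/
def unitCube (n : ℕ) : Set (EuclideanSpace ℝ (Fin n)) :=
  {p | ∀ i, p i ∈ Set.Icc (0 : ℝ) 1}

namespace CC

/-- summand of the binary value -/
def bt (s : ℕ → Bool) (k : ℕ) : ℝ := cond (s k) ((1/2:ℝ)^(k+1)) 0

lemma bt_nonneg (s : ℕ → Bool) (k : ℕ) : 0 ≤ bt s k := by
  cases h : s k <;> simp [bt, h] <;> positivity

lemma bt_le (s : ℕ → Bool) (k : ℕ) : bt s k ≤ (1/2:ℝ)^(k+1) := by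
  cases h : s k <;> simp [bt, h] <;> positivity

lemma sg : Summable (fun k => (1/2:ℝ)^(k+1)) := by
  have : Summable (fun k => (1/2:ℝ)^k) := summable_geometric_of_lt_one (by norm_num) (by norm_num)
  simpa [pow_succ, mul_comm] using this.mul_right (1/2:ℝ)

lemma sg_tsum : ∑' k, (1/2:ℝ)^(k+1) = 1 := by
  have h : ∑' k, (1/2:ℝ)^k = 2 := by
    rw [tsum_geometric_of_lt_one (by norm_num) (by norm_num)]; norm_num
  calc ∑' k, (1/2:ℝ)^(k+1) = ∑' k, (1/2:ℝ)^k * (1/2) := tsum_congr (fun k => pow_succ _ _)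
    _ = (∑' k, (1/2:ℝ)^k) * (1/2) := by rw [tsum_mul_right]
    _ = 1 := by rw [h]; norm_num

lemma summable_bt (s : ℕ → Bool) : Summable (bt s) :=
  Summable.of_nonneg_of_le (bt_nonneg s) (bt_le s) sg

/-- the binary value of a 0-1-sequence -/
def bval (s : ℕ → Bool) : ℝ := ∑' k, bt s k

lemma bval_nonneg (s : ℕ → Bool) : 0 ≤ bval s :=
  tsum_nonneg (bt_nonneg s)

lemma bval_le_one (s : ℕ → Bool) : bval s ≤ 1 := by
  have := Summable.tsum_le_tsum (bt_le s) (summable_bt s) sg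
  rwa [sg_tsum] at this

/-- tail of the binary value -/
def btail (s : ℕ → Bool) (k : ℕ) : ℝ := ∑' i, bt s (i + k)

lemma bval_eq_head_add_tail (s : ℕ → Bool) (k : ℕ) :
    bval s = (∑ i ∈ Finset.range k, bt s i) + btail s k :=
  (Summable.sum_add_tsum_nat_add k (summable_bt s)).symm

lemma btail_nonneg (s : ℕ → Bool) (k : ℕ) : 0 ≤ btail s k :=
  tsum_nonneg (fun i => bt_nonneg s _)

lemma sg_shift_tsum (k : ℕ) : ∑' i, (1/2:ℝ)^(i + k + 1) = (1/2:ℝ)^k := by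
  calc ∑' i, (1/2:ℝ)^(i + k + 1) = ∑' i, (1/2:ℝ)^(i+1) * (1/2)^k :=
        tsum_congr (fun i => by rw [← pow_add]; ring_nf)
    _ = (∑' i, (1/2:ℝ)^(i+1)) * (1/2)^k := by rw [tsum_mul_right]
    _ = (1/2:ℝ)^k := by rw [sg_tsum, one_mul]

lemma sg_shift (k : ℕ) : Summable (fun i => (1/2:ℝ)^(i + k + 1)) := by
  apply (summable_nat_add_iff k).2 sg

lemma btail_le (s : ℕ → Bool) (k : ℕ) : btail s k ≤ (1/2:ℝ)^k := by
  have h1 : Summable (fun i => (1/2:ℝ)^(i + k + 1)) := by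
    apply (summable_nat_add_iff k).2 sg
  have := Summable.tsum_le_tsum (fun i => bt_le s (i+k)) ((summable_bt s).comp_injective (add_left_injective k)) h1
  calc btail s k ≤ ∑' i, (1/2:ℝ)^(i + k + 1) := this
    _ = (1/2:ℝ)^k := sg_shift_tsum k

lemma head_congr {s t : ℕ → Bool} {k : ℕ} (h : ∀ i < k, s i = t i) :
    ∑ i ∈ Finset.range k, bt s i = ∑ i ∈ Finset.range k, bt t i := by
  apply Finset.sum_congr rfl
  intro i hi
  rw [Finset.mem_range] at hi
  simp [bt, h i hi]

lemma abs_bval_sub_le {s t : ℕ → Bool} {k : ℕ} (h : ∀ i < k, s i = t i) :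
    |bval s - bval t| ≤ (1/2:ℝ)^k := by
  rw [bval_eq_head_add_tail s k, bval_eq_head_add_tail t k, head_congr h]
  have h1 := btail_nonneg s k
  have h2 := btail_nonneg t k
  have h3 := btail_le s k
  have h4 := btail_le t k
  rw [abs_le]
  constructor <;> nlinarith


/-- value of the first `k` binary digits as a natural number -/
def pref (s : ℕ → Bool) : ℕ → ℕ
  | 0 => 0
  | (k+1) => 2 * pref s k + cond (s k) 1 0

lemma pref_cast (s : ℕ → Bool) (k : ℕ) :
    (pref s k : ℝ) * (1/2:ℝ)^k = ∑ i ∈ Finset.range k, bt s i := by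
  induction k with
  | zero => simp [pref]
  | succ k ih =>
    rw [Finset.sum_range_succ, ← ih, pref]
    push_cast
    cases h : s k <;> simp [bt, h] <;> ring

lemma pref_bounds (s : ℕ → Bool) (k : ℕ) :
    (pref s k : ℝ) * (1/2:ℝ)^k ≤ bval s ∧ bval s ≤ (pref s k : ℝ) * (1/2:ℝ)^k + (1/2:ℝ)^k := by
  rw [pref_cast, bval_eq_head_add_tail s k]
  have h1 := btail_nonneg s k
  have h2 := btail_le s k
  constructor <;> linarith

lemma pref_inj {s t : ℕ → Bool} {k : ℕ} (h : pref s k = pref t k) : ∀ i < k, s i = t i := by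
  induction k with
  | zero => intro i hi; omega
  | succ k ih =>
    rw [pref, pref] at h
    have hb : cond (s k) 1 0 = cond (t k) 1 0 ∧ pref s k = pref t k := by
      cases hs : s k <;> cases ht : t k <;> simp [hs, ht] at h ⊢ <;> omega
    intro i hi
    rcases Nat.lt_succ_iff_lt_or_eq.1 hi with h' | h'
    · exact ih hb.2 i h'
    · subst h'
      cases hs : s i <;> cases ht : t i <;> simp [hs, ht] at hb ⊢

/-- eventually constant sequences -/
def D : Set (ℕ → Bool) := {s | ∃ m, ∀ k, m ≤ k → s k = s m}

lemma countable_D : D.Countable := by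
  have hD : D = ⋃ m : ℕ, {s : ℕ → Bool | ∀ k, m ≤ k → s k = s m} := by
    ext s; simp only [D, Set.mem_setOf_eq, Set.mem_iUnion]
  rw [hD]
  apply Set.countable_iUnion
  intro m
  have hfin : {s : ℕ → Bool | ∀ k, m ≤ k → s k = s m}.Finite := by
    apply Set.Finite.of_finite_image
      (f := fun (s : ℕ → Bool) => (fun i : Fin (m+1) => s i.val))
    · exact Set.toFinite _
    rintro s hs t ht hst
    ext k
    by_cases hk : k ≤ m
    · exact congr_fun hst ⟨k, by omega⟩
    · push_neg at hk
      have e1 : s k = s m := hs k hk.le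
      have e2 : t k = t m := ht k hk.le
      have e3 : s m = t m := congr_fun hst ⟨m, by omega⟩
      rw [e1, e2, e3]
  exact hfin.countable

/-- the one-sided dichotomy lemma -/
lemma bval_eq_aux {s t : ℕ → Bool} {m : ℕ} (hm : ∀ i < m, s i = t i)
    (hs : s m = true) (ht : t m = false) (h : bval s = bval t) :
    (∀ k, m + 1 ≤ k → s k = false) ∧ (∀ k, m + 1 ≤ k → t k = true) := by
  have hhead : ∑ i ∈ Finset.range m, bt s i = ∑ i ∈ Finset.range m, bt t i := head_congr hm
  have es : bval s = (∑ i ∈ Finset.range m, bt s i) + (1/2:ℝ)^(m+1) + btail s (m+1) := by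
    rw [bval_eq_head_add_tail s (m+1), Finset.sum_range_succ]
    simp [bt, hs]
    try ring
  have et : bval t = (∑ i ∈ Finset.range m, bt t i) + btail t (m+1) := by
    rw [bval_eq_head_add_tail t (m+1), Finset.sum_range_succ]
    simp [bt, ht]
  have key : (1/2:ℝ)^(m+1) + btail s (m+1) = btail t (m+1) := by
    rw [es, et, hhead] at h; linarith
  have hts : btail s (m+1) = 0 := by
    have h1 := btail_le t (m+1)
    have h2 := btail_nonneg s (m+1)
    linarith
  have htt : btail t (m+1) = (1/2:ℝ)^(m+1) := by linarith
  constructor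
  · intro k hk
    by_contra hc
    have hk' : s k = true := by cases hck : s k <;> simp [hck] at hc ⊢
    have hle0 : bt s ((k - (m+1)) + (m+1)) ≤ btail s (m+1) := by
      apply Summable.le_tsum (f := fun i => bt s (i + (m+1)))
        ((summable_bt s).comp_injective (add_left_injective (m+1))) (k - (m+1))
      intro j _
      exact bt_nonneg s _
    rw [hts] at hle0
    have hkk : (k - (m+1)) + (m+1) = k := by omega
    rw [hkk] at hle0
    have hpos : (0:ℝ) < bt s k := by simp only [bt, hk', cond_true]; positivity
    linarith
  · intro k hk
    by_contra hc
    have hk' : t k = false := by cases hck : t k <;> simp [hck] at hc ⊢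
    set j := k - (m+1) with hj
    have hkk : j + (m+1) = k := by omega
    have hsummax : Summable (fun i => (1/2:ℝ)^(i + (m+1) + 1)) := sg_shift (m+1)
    have hterm : ∀ i, bt t (i + (m+1)) ≤
        (if i = j then 0 else (1/2:ℝ)^(i + (m+1) + 1)) := by
      intro i
      by_cases hij : i = j
      · subst hij; rw [hkk]
        simp [bt, hk']
      · simp only [if_neg hij]
        exact bt_le t _
    have hsum2 : Summable (fun i => (if i = j then 0 else (1/2:ℝ)^(i + (m+1) + 1))) := by
      apply Summable.of_nonneg_of_le _ _ hsummax
      · intro i; by_cases hij : i = j <;> simp [hij] <;> positivity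
      · intro i; by_cases hij : i = j <;> simp [hij] <;> positivity
    have hle : btail t (m+1) ≤ ∑' i, (if i = j then 0 else (1/2:ℝ)^(i + (m+1) + 1)) :=
      Summable.tsum_le_tsum hterm ((summable_bt t).comp_injective (add_left_injective (m+1))) hsum2
    have hsplit : (∑' i, (if i = j then 0 else (1/2:ℝ)^(i + (m+1) + 1)))
        + (1/2:ℝ)^(j + (m+1) + 1) = (1/2:ℝ)^(m+1) := by
      have hind : Summable (fun i => (if i = j then (1/2:ℝ)^(j + (m+1) + 1) else 0)) :=
        summable_of_finite_support (Set.Finite.subset (Set.finite_singleton j)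
          (fun i hi => by
            simp only [Function.mem_support] at hi
            by_contra hij
            exact hi (if_neg (by simpa using hij))))
      have hadd : ∀ i, (if i = j then 0 else (1/2:ℝ)^(i + (m+1) + 1))
          + (if i = j then (1/2:ℝ)^(j + (m+1) + 1) else 0) = (1/2:ℝ)^(i + (m+1) + 1) := by
        intro i
        by_cases hij : i = j
        · subst hij; simp
        · simp [hij]
      have h1 : ∑' i, ((if i = j then 0 else (1/2:ℝ)^(i + (m+1) + 1))
          + (if i = j then (1/2:ℝ)^(j + (m+1) + 1) else 0))
          = (∑' i, (if i = j then 0 else (1/2:ℝ)^(i + (m+1) + 1)))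
          + ∑' i, (if i = j then (1/2:ℝ)^(j + (m+1) + 1) else 0) := Summable.tsum_add hsum2 hind
      have h2 : ∑' (i : ℕ), (if i = j then (1/2:ℝ)^(j + (m+1) + 1) else 0)
          = (1/2:ℝ)^(j + (m+1) + 1) := tsum_ite_eq j _
      rw [tsum_congr hadd] at h1
      rw [← h2, ← h1, sg_shift_tsum (m+1)]
    have hjpos : (0:ℝ) < (1/2:ℝ)^(j + (m+1) + 1) := by positivity
    rw [htt] at hle
    linarith

lemma bval_dichotomy {s t : ℕ → Bool} (h : bval s = bval t) :
    s = t ∨ (s ∈ D ∧ t ∈ D) := by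
  by_cases hst : s = t
  · exact Or.inl hst
  right
  have hne : ∃ k, s k ≠ t k := Function.ne_iff.1 hst
  set m := Nat.find hne with hm
  have hmin : ∀ i < m, s i = t i := by
    intro i hi
    have := Nat.find_min hne hi
    simpa using this
  have hsm : s m ≠ t m := Nat.find_spec hne
  have mkD : ∀ (u : ℕ → Bool) (b : Bool), (∀ k, m + 1 ≤ k → u k = b) → u ∈ D := by
    intro u b hu
    exact ⟨m+1, fun k hk => by rw [hu k hk, hu (m+1) le_rfl]⟩
  cases hsv : s m with
  | true =>
    have htv : t m = false := by cases htv : t m <;> simp [hsv, htv] at hsm ⊢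
    obtain ⟨h1, h2⟩ := bval_eq_aux hmin hsv htv h
    exact ⟨mkD s false h1, mkD t true h2⟩
  | false =>
    have htv : t m = true := by cases htv : t m <;> simp [hsv, htv] at hsm ⊢
    obtain ⟨h1, h2⟩ := bval_eq_aux (fun i hi => (hmin i hi).symm) htv hsv h.symm
    exact ⟨mkD s true h2, mkD t false h1⟩

/-- greedy partial sums -/
def gp (r : ℝ) : ℕ → ℝ
  | 0 => 0
  | (k+1) => if gp r k + (1/2:ℝ)^(k+1) ≤ r then gp r k + (1/2:ℝ)^(k+1) else gp r k

/-- greedy digits -/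
def gs (r : ℝ) (k : ℕ) : Bool := decide (gp r k + (1/2:ℝ)^(k+1) ≤ r)

lemma gp_le {r : ℝ} (h0 : 0 ≤ r) : ∀ k, gp r k ≤ r := by
  intro k
  induction k with
  | zero => exact h0
  | succ k ih =>
    rw [gp]
    split
    · assumption
    · exact ih

lemma le_gp {r : ℝ} (h1 : r ≤ 1) : ∀ k, r ≤ gp r k + (1/2:ℝ)^k := by
  intro k
  induction k with
  | zero => simpa [gp] using h1
  | succ k ih =>
    rw [gp]
    split
    · next hcase =>
      have : (1/2:ℝ)^k = (1/2:ℝ)^(k+1) + (1/2:ℝ)^(k+1) := by ring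
      linarith
    · next hcase => push_neg at hcase; linarith

lemma gp_eq_head (r : ℝ) (k : ℕ) : gp r k = ∑ i ∈ Finset.range k, bt (gs r) i := by
  induction k with
  | zero => simp [gp]
  | succ k ih =>
    rw [Finset.sum_range_succ, ← ih, gp, bt, gs]
    by_cases hc : gp r k + (1/2:ℝ)^(k+1) ≤ r
    · rw [if_pos hc, decide_eq_true hc, cond_true]
    · rw [if_neg hc, decide_eq_false hc, cond_false, add_zero]

lemma bval_surj {r : ℝ} (h0 : 0 ≤ r) (h1 : r ≤ 1) : bval (gs r) = r := by
  have key : ∀ k, |bval (gs r) - r| ≤ 2 * (1/2:ℝ)^k := by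
    intro k
    have e1 : bval (gs r) = gp r k + btail (gs r) k := by
      rw [bval_eq_head_add_tail (gs r) k, gp_eq_head]
    have e2 := btail_nonneg (gs r) k
    have e3 := btail_le (gs r) k
    have e4 := gp_le h0 k
    have e5 := le_gp h1 k
    rw [abs_le]
    constructor <;> nlinarith
  by_contra hne
  have hpos : 0 < |bval (gs r) - r| := by
    rcases lt_or_gt_of_ne (sub_ne_zero.2 (fun hh => hne hh)) with hlt | hgt
    · simpa using abs_pos.2 hlt.ne
    · simpa using abs_pos.2 hgt.ne'
  obtain ⟨k, hk⟩ := exists_pow_lt_of_lt_one (half_pos hpos) (by norm_num : (1/2:ℝ) < 1)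
  have := key k
  nlinarith [hk]

/-- the `j`-th sequence `1 1 ... 1 0 0 0 ...` -/
def oj (j : ℕ) : ℕ → Bool := fun k => decide (k < j)

lemma oj_mem_D (j : ℕ) : oj j ∈ D := by
  refine ⟨j, fun k hk => ?_⟩
  simp [oj, Nat.not_lt.2 hk]

lemma bval_oj_succ (j : ℕ) : bval (oj (j+1)) = bval (oj j) + (1/2:ℝ)^(j+1) := by
  have hfun : ∀ k, bt (oj (j+1)) k = bt (oj j) k + (if k = j then (1/2:ℝ)^(j+1) else 0) := by
    intro k
    rcases lt_trichotomy k j with hkj | hkj | hkj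
    · simp [bt, oj, hkj, hkj.trans (Nat.lt_succ_self j), hkj.ne]
    · subst hkj; simp [bt, oj]
    · have h1 : ¬(k < j) := by omega
      have h2 : ¬(k < j + 1) := by omega
      simp [bt, oj, h1, h2, if_neg (by omega : ¬ k = j)]
  have hind : Summable (fun k => (if k = j then (1/2:ℝ)^(j+1) else 0)) :=
    summable_of_finite_support (Set.Finite.subset (Set.finite_singleton j)
      (fun i hi => by
        simp only [Function.mem_support] at hi
        by_contra hij
        exact hi (if_neg (by simpa using hij))))
  calc bval (oj (j+1)) = ∑' k, (bt (oj j) k + (if k = j then (1/2:ℝ)^(j+1) else 0)) :=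
        tsum_congr hfun
    _ = bval (oj j) + ∑' k, (if k = j then (1/2:ℝ)^(j+1) else 0) :=
        Summable.tsum_add (summable_bt _) hind
    _ = bval (oj j) + (1/2:ℝ)^(j+1) := by rw [tsum_ite_eq]

lemma bval_oj_strictMono : StrictMono (fun j => bval (oj j)) := by
  apply strictMono_nat_of_lt_succ
  intro j
  rw [bval_oj_succ]
  have : (0:ℝ) < (1/2:ℝ)^(j+1) := by positivity
  linarith

lemma oj_injective : Function.Injective oj := by
  intro a b hab
  by_contra hne
  exact absurd (congrArg bval hab) (bval_oj_strictMono.injective.ne hne)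

lemma infinite_D : D.Infinite :=
  Set.infinite_of_injective_forall_mem (f := fun j : ℕ => oj j) oj_injective oj_mem_D

lemma infinite_image_D : (bval '' D).Infinite :=
  Set.infinite_of_injective_forall_mem (f := fun j : ℕ => bval (oj j))
    bval_oj_strictMono.injective (fun j => ⟨oj j, oj_mem_D j, rfl⟩)

/-- a bijection between the eventually constant sequences and the dyadic values -/
def psi : ↥D ≃ ↥(bval '' D) := by
  have h1 : Nonempty (Denumerable ↥D) :=
    nonempty_denumerable_iff.2 ⟨Set.countable_coe_iff.2 countable_D,
      Set.infinite_coe_iff.2 infinite_D⟩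
  have h2 : Nonempty (Denumerable ↥(bval '' D)) :=
    nonempty_denumerable_iff.2 ⟨Set.countable_coe_iff.2 (countable_D.image bval),
      Set.infinite_coe_iff.2 infinite_image_D⟩
  exact Classical.choice (by
    obtain ⟨d1⟩ := h1
    obtain ⟨d2⟩ := h2
    exact ⟨(Denumerable.eqv _).trans (Denumerable.eqv _).symm⟩)

open Classical in
/-- the bijection `2^ω → [0,1]` -/
def phi (s : ℕ → Bool) : ℝ := if h : s ∈ D then (psi ⟨s, h⟩ : ℝ) else bval s

lemma phi_eq_of_not_mem {s : ℕ → Bool} (h : s ∉ D) : phi s = bval s := by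
  simp [phi, h]

lemma phi_mem_of_mem {s : ℕ → Bool} (h : s ∈ D) : phi s ∈ bval '' D := by
  classical
  simp only [phi, dif_pos h]
  exact (psi ⟨s, h⟩).2

lemma bval_not_mem_image_D {s : ℕ → Bool} (h : s ∉ D) : bval s ∉ bval '' D := by
  rintro ⟨t, htD, hts⟩
  rcases bval_dichotomy hts with h1 | h2
  · exact h (h1 ▸ htD)
  · exact h h2.2

lemma phi_injective : Function.Injective phi := by
  classical
  intro s t h
  by_cases hs : s ∈ D <;> by_cases ht : t ∈ D
  · simp only [phi, dif_pos hs, dif_pos ht] at h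
    have h2 : psi ⟨s, hs⟩ = psi ⟨t, ht⟩ := Subtype.ext h
    have h3 := psi.injective h2
    exact congrArg Subtype.val h3
  · exfalso
    apply bval_not_mem_image_D ht
    rw [← phi_eq_of_not_mem ht, ← h]
    exact phi_mem_of_mem hs
  · exfalso
    apply bval_not_mem_image_D hs
    rw [← phi_eq_of_not_mem hs, h]
    exact phi_mem_of_mem ht
  · rw [phi_eq_of_not_mem hs, phi_eq_of_not_mem ht] at h
    rcases bval_dichotomy h with h1 | h2
    · exact h1
    · exact absurd h2.1 hs

lemma phi_mem_Icc (s : ℕ → Bool) : phi s ∈ Set.Icc (0:ℝ) 1 := by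
  classical
  by_cases hs : s ∈ D
  · obtain ⟨t, _, ht⟩ := phi_mem_of_mem hs
    rw [← ht]
    exact ⟨bval_nonneg t, bval_le_one t⟩
  · rw [phi_eq_of_not_mem hs]
    exact ⟨bval_nonneg s, bval_le_one s⟩

lemma phi_surj {r : ℝ} (h0 : 0 ≤ r) (h1 : r ≤ 1) : ∃ s, phi s = r := by
  classical
  by_cases hr : r ∈ bval '' D
  · obtain ⟨d, hd⟩ := psi.surjective ⟨r, hr⟩
    refine ⟨d.1, ?_⟩
    simp only [phi, dif_pos d.2]
    rw [Subtype.coe_eta, hd]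
  · refine ⟨gs r, ?_⟩
    have hgs : gs r ∉ D := by
      intro hmem
      exact hr ⟨gs r, hmem, bval_surj h0 h1⟩
    rw [phi_eq_of_not_mem hgs, bval_surj h0 h1]

lemma range_phi : Set.range phi = Set.Icc (0:ℝ) 1 := by
  apply Set.Subset.antisymm
  · rintro x ⟨s, rfl⟩
    exact phi_mem_Icc s
  · rintro r ⟨h0, h1⟩
    obtain ⟨s, hs⟩ := phi_surj h0 h1
    exact ⟨s, hs⟩

/-! ### Lipschitz and measurability facts -/

lemma abs_bval_sub_le_dist (s t : Cantor) : |bval s - bval t| ≤ dist s t := by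
  by_cases hst : s = t
  · simp [hst]
  · rw [PiNat.dist_eq_of_ne hst]
    exact abs_bval_sub_le (fun i hi => PiNat.apply_eq_of_lt_firstDiff hi)

lemma lipschitz_bval : LipschitzWith 1 (bval : Cantor → ℝ) :=
  LipschitzWith.of_dist_le_mul (fun s t => by
    rw [NNReal.coe_one, one_mul, Real.dist_eq]
    exact abs_bval_sub_le_dist s t)

lemma measurable_bval : Measurable (bval : Cantor → ℝ) :=
  lipschitz_bval.continuous.measurable

lemma measurable_phi : Measurable (phi : Cantor → ℝ) := by
  classical
  intro E hE
  have hset : phi ⁻¹' E = (D ∩ phi ⁻¹' E) ∪ (Dᶜ ∩ bval ⁻¹' E) := by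
    ext s
    by_cases hs : s ∈ D
    · simp [hs]
    · simp [hs, phi_eq_of_not_mem hs]
  rw [hset]
  exact ((countable_D.mono Set.inter_subset_left).measurableSet).union
    ((countable_D.measurableSet.compl).inter (measurable_bval hE))

/-! ### Cantor space geometry -/

lemma cantor_dist_le_of_agree {x y : Cantor} {M : ℕ} (h : ∀ m, m < M → x m = y m) :
    dist x y ≤ (1/2:ℝ)^M := by
  have : x ∈ PiNat.cylinder y M := PiNat.mem_cylinder_iff.2 (fun i hi => h i hi)
  exact PiNat.mem_cylinder_iff_dist_le.1 this

lemma cantor_dist_gap {x y : Cantor} {j : ℕ} (h : dist x y < (1/2:ℝ)^j) :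
    dist x y ≤ (1/2:ℝ)^(j+1) := by
  by_cases hxy : x = y
  · rw [hxy, dist_self]; positivity
  · rw [PiNat.dist_eq_of_ne hxy] at h ⊢
    have hf : j < PiNat.firstDiff x y := by
      by_contra hc
      push_neg at hc
      exact absurd (pow_le_pow_of_le_one (by norm_num) (by norm_num) hc) (not_le.2 h)
    exact pow_le_pow_of_le_one (by norm_num) (by norm_num) hf

/-! ### streams and the map to the cube -/

variable (n : ℕ)

/-- the `i`-th stream of interleaved digits -/
def str (i : Fin n) (x : Cantor) : ℕ → Bool := fun k => x (n*k+i)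

/-- the Borel bijection from Cantor space to the unit cube -/
def F (x : Cantor) : EuclideanSpace ℝ (Fin n) :=
  (WithLp.equiv 2 _).symm (fun i => phi (str n i x))

lemma F_apply (x : Cantor) (i : Fin n) : F n x i = phi (str n i x) := rfl

lemma measurable_str (i : Fin n) : Measurable (str n i) := by
  apply measurable_pi_lambda
  intro k
  exact measurable_pi_apply _

lemma measurable_F : Measurable (F n) := by
  have : Measurable (fun x : Cantor => (fun i => phi (str n i x) : Fin n → ℝ)) := by
    apply measurable_pi_lambda
    intro i
    exact measurable_phi.comp (measurable_str n i)
  exact (MeasurableEquiv.toLp 2 (Fin n → ℝ)).measurable.comp this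

lemma str_assemble (hn : 1 ≤ n) (si : Fin n → (ℕ → Bool)) :
    ∀ i : Fin n, str n i (fun m => si ⟨m % n, Nat.mod_lt m hn⟩ (m / n)) = si i := by
  intro i
  funext k
  have h1 : (n * k + (i:ℕ)) % n = i := by
    rw [Nat.mul_add_mod]
    exact Nat.mod_eq_of_lt i.2
  have h2 : (n * k + (i:ℕ)) / n = k := by
    rw [Nat.mul_add_div (by omega : 0 < n)]
    rw [Nat.div_eq_of_lt i.2]
    omega
  have h3 : (⟨(n * k + (i:ℕ)) % n, Nat.mod_lt _ hn⟩ : Fin n) = i := Fin.ext h1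
  simp only [str, h3, h2]

lemma F_injective (hn : 1 ≤ n) : Function.Injective (F n) := by
  intro x y h
  have hs : ∀ i : Fin n, str n i x = str n i y := by
    intro i
    apply phi_injective
    have := congrArg (fun p : EuclideanSpace ℝ (Fin n) => p i) h
    simpa [F_apply] using this
  funext m
  have hm : m = n * (m / n) + (⟨m % n, Nat.mod_lt m hn⟩ : Fin n) := by
    show m = n * (m / n) + m % n
    exact (Nat.div_add_mod m n).symm
  calc x m = x (n * (m / n) + (⟨m % n, Nat.mod_lt m hn⟩ : Fin n)) := by rw [← hm]
    _ = str n ⟨m % n, Nat.mod_lt m hn⟩ x (m / n) := rfl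
    _ = str n ⟨m % n, Nat.mod_lt m hn⟩ y (m / n) := by rw [hs]
    _ = y m := by rw [str]; rw [← hm]

lemma range_F (hn : 1 ≤ n) :
    Set.range (F n) = {p : EuclideanSpace ℝ (Fin n) | ∀ i, p i ∈ Set.Icc (0:ℝ) 1} := by
  apply Set.Subset.antisymm
  · rintro p ⟨x, rfl⟩
    intro i
    rw [F_apply]
    exact phi_mem_Icc _
  · intro p hp
    have : ∀ i : Fin n, ∃ s, phi s = p i := by
      intro i
      exact phi_surj (hp i).1 (hp i).2
    choose si hsi using this
    refine ⟨fun m => si ⟨m % n, Nat.mod_lt m hn⟩ (m / n), ?_⟩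
    have := str_assemble n hn si
    apply (MeasurableEquiv.toLp 2 (Fin n → ℝ)).symm.injective
    funext i
    show F n _ i = p i
    rw [F_apply, this i, hsi i]

/-! ### the abstract transfer lemma for `mkMetric` null sets -/

lemma transfer_null {X Y : Type*} [EMetricSpace X] [MeasurableSpace X] [BorelSpace X]
    [EMetricSpace Y] [MeasurableSpace Y] [BorelSpace Y]
    (m₁ m₂ : ℝ≥0∞ → ℝ≥0∞) (hm₁ : m₁ 0 = 0) (s : Set X) (s' : Set Y) (Φ : Set X → Set Y)
    (hΦ : ∀ u : ℕ → Set X, s ⊆ (⋃ k, u k) → s' ⊆ ⋃ k, Φ (u k))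
    (C : ℝ≥0∞) (hC : C ≠ ⊤)
    (H : ∀ r : ℝ≥0∞, 0 < r → ∃ r' : ℝ≥0∞, 0 < r' ∧ ∀ U : Set X, Metric.ediam U ≤ r' →
      ∃ t : ℕ → Set Y, Φ U ⊆ (⋃ i, t i) ∧ (∀ i, Metric.ediam (t i) ≤ r) ∧
        (∑' i, m₂ (Metric.ediam (t i))) ≤ C * m₁ (Metric.ediam U))
    (h0 : Measure.mkMetric m₁ s = 0) : Measure.mkMetric m₂ s' = 0 := by
  refine le_antisymm ?_ zero_le
  rw [Measure.mkMetric_apply]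
  refine iSup₂_le fun r hr => ?_
  obtain ⟨r', hr', hH⟩ := H r hr
  refine ENNReal.le_of_forall_pos_le_add fun ε hε _ => ?_
  rw [zero_add]
  set ε' : ℝ≥0∞ := (ε : ℝ≥0∞) / (C + 1) with hε'def
  have hε'pos : 0 < ε' := ENNReal.div_pos (by exact_mod_cast hε.ne') (by simp [hC])
  -- extract a good cover of `s`
  have hinner : (⨅ (t : ℕ → Set X) (_ : s ⊆ iUnion t)
      (_ : ∀ k, Metric.ediam (t k) ≤ r'), ∑' k, ⨆ _ : (t k).Nonempty, m₁ (Metric.ediam (t k)))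
      = 0 := by
    refine le_antisymm ?_ zero_le
    rw [Measure.mkMetric_apply] at h0
    calc _ ≤ ⨆ (ρ : ℝ≥0∞) (_ : 0 < ρ), ⨅ (t : ℕ → Set X) (_ : s ⊆ iUnion t)
        (_ : ∀ k, Metric.ediam (t k) ≤ ρ), ∑' k, ⨆ _ : (t k).Nonempty, m₁ (Metric.ediam (t k)) :=
          le_iSup₂ (f := fun ρ (_ : 0 < ρ) => ⨅ (t : ℕ → Set X) (_ : s ⊆ iUnion t)
            (_ : ∀ k, Metric.ediam (t k) ≤ ρ),
            ∑' k, ⨆ _ : (t k).Nonempty, m₁ (Metric.ediam (t k))) r' hr'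
      _ = 0 := h0
  have hlt : (⨅ (t : ℕ → Set X) (_ : s ⊆ iUnion t)
      (_ : ∀ k, Metric.ediam (t k) ≤ r'), ∑' k, ⨆ _ : (t k).Nonempty, m₁ (Metric.ediam (t k)))
      < ε' := by rw [hinner]; exact hε'pos
  obtain ⟨u, hu⟩ := iInf_lt_iff.1 hlt
  obtain ⟨hucov, hu2⟩ := iInf_lt_iff.1 hu
  obtain ⟨hudiam, husum⟩ := iInf_lt_iff.1 hu2
  -- transfer each piece of the cover
  choose t ht1 ht2 ht3 using fun k => hH (u k) (hudiam k)
  -- assemble into one cover of `s'`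
  set v : ℕ → Set Y := fun j => t (Nat.pairEquiv.symm j).1 (Nat.pairEquiv.symm j).2 with hv
  have hvcov : s' ⊆ ⋃ j, v j := by
    refine (hΦ u hucov).trans ?_
    refine Set.iUnion_subset fun k => (ht1 k).trans ?_
    refine Set.iUnion_subset fun i => ?_
    intro y hy
    exact Set.mem_iUnion.2 ⟨Nat.pairEquiv (k, i), by
      simp only [hv, Equiv.symm_apply_apply]
      exact hy⟩
  have hvdiam : ∀ j, Metric.ediam (v j) ≤ r := fun j => ht2 _ _
  refine le_trans (iInf_le_of_le v (iInf_le_of_le hvcov (iInf_le_of_le hvdiam le_rfl))) ?_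
  -- bound the sum
  have hsum1 : (∑' j, ⨆ _ : (v j).Nonempty, m₂ (Metric.ediam (v j)))
      ≤ ∑' j, m₂ (Metric.ediam (v j)) :=
    ENNReal.tsum_le_tsum fun j => iSup_le fun _ => le_rfl
  have hsum2 : (∑' j, m₂ (Metric.ediam (v j)))
      = ∑' (p : ℕ × ℕ), m₂ (Metric.ediam (t p.1 p.2)) := by
    rw [← Nat.pairEquiv.symm.tsum_eq (fun p : ℕ × ℕ => m₂ (Metric.ediam (t p.1 p.2)))]
  have hsum3 : (∑' (p : ℕ × ℕ), m₂ (Metric.ediam (t p.1 p.2)))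
      ≤ ∑' k, C * m₁ (Metric.ediam (u k)) := by
    calc (∑' (p : ℕ × ℕ), m₂ (Metric.ediam (t p.1 p.2)))
        = ∑' k, ∑' i, m₂ (Metric.ediam (t k i)) :=
          ENNReal.tsum_prod (f := fun a b => m₂ (Metric.ediam (t a b)))
      _ ≤ ∑' k, C * m₁ (Metric.ediam (u k)) := ENNReal.tsum_le_tsum fun k => ht3 k
  have hsum4 : (∑' k, C * m₁ (Metric.ediam (u k)))
      ≤ C * ∑' k, ⨆ _ : (u k).Nonempty, m₁ (Metric.ediam (u k)) := by
    rw [ENNReal.tsum_mul_left]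
    refine mul_le_mul_right (ENNReal.tsum_le_tsum fun k => ?_) C
    rcases Set.eq_empty_or_nonempty (u k) with hk | hk
    · simp [hk, hm₁]
    · simp [hk]
  calc (∑' j, ⨆ _ : (v j).Nonempty, m₂ (Metric.ediam (v j)))
      ≤ C * ∑' k, ⨆ _ : (u k).Nonempty, m₁ (Metric.ediam (u k)) :=
        hsum1.trans (hsum2 ▸ hsum3.trans hsum4)
    _ ≤ C * ε' := mul_le_mul_right husum.le C
    _ ≤ (C + 1) * ((ε : ℝ≥0∞) / (C + 1)) := mul_le_mul_left (le_self_add) _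
    _ = (ε : ℝ≥0∞) := ENNReal.mul_div_cancel (by simp) (by simp [hC])

/-! ### helper lemmas for the covering arguments -/

lemma gauge_nonneg {g : ℝ → ℝ} (hg : IsGauge g) {t : ℝ} (ht : 0 ≤ t) : 0 ≤ g t := by
  rw [← hg.zero]
  exact hg.mono (Set.mem_Ici.2 le_rfl) (Set.mem_Ici.2 ht) ht

lemma gauge_mono {g : ℝ → ℝ} (hg : IsGauge g) {a b : ℝ} (ha : 0 ≤ a) (hab : a ≤ b) :
    g a ≤ g b :=
  hg.mono (Set.mem_Ici.2 ha) (Set.mem_Ici.2 (ha.trans hab)) hab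

/-- convert a finitely-indexed cover into a `ℕ`-indexed cover -/
lemma exists_nat_family {Y : Type*} [EMetricSpace Y] {ι : Type} [Fintype ι]
    (sfam : ι → Set Y) :
    ∃ t : ℕ → Set Y, (⋃ i, t i) = (⋃ i, sfam i) ∧
      (∀ k, t k = ∅ ∨ ∃ i, t k = sfam i) ∧
      (∀ m : ℝ≥0∞ → ℝ≥0∞, m 0 = 0 →
        (∑' k, m (Metric.ediam (t k))) ≤ ∑ i, m (Metric.ediam (sfam i))) := by
  classical
  letI : Encodable ι := Fintype.toEncodable ι
  refine ⟨fun k => if h : ∃ i : ι, Encodable.encode i = k then sfam h.choose else ∅, ?_, ?_, ?_⟩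
  · apply Set.Subset.antisymm
    · refine Set.iUnion_subset fun k => ?_
      by_cases h : ∃ i : ι, Encodable.encode i = k
      · rw [dif_pos h]
        exact Set.subset_iUnion sfam h.choose
      · rw [dif_neg h]
        exact Set.empty_subset _
    · refine Set.iUnion_subset fun i => ?_
      have h : ∃ i' : ι, Encodable.encode i' = Encodable.encode i := ⟨i, rfl⟩
      have hch : h.choose = i := Encodable.encode_injective h.choose_spec
      intro y hy
      refine Set.mem_iUnion.2 ⟨Encodable.encode i, ?_⟩
      rw [dif_pos h, hch]
      exact hy
  · intro k
    by_cases h : ∃ i : ι, Encodable.encode i = k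
    · right; exact ⟨h.choose, dif_pos h⟩
    · left; exact dif_neg h
  · intro m hm
    have hz : ∀ k ∉ Finset.image (Encodable.encode (α := ι)) Finset.univ,
        m (Metric.ediam (if h : ∃ i : ι, Encodable.encode i = k then sfam h.choose else ∅)) = 0 := by
      intro k hk
      have h : ¬ ∃ i : ι, Encodable.encode i = k := by
        rintro ⟨i, rfl⟩
        exact hk (Finset.mem_image.2 ⟨i, Finset.mem_univ i, rfl⟩)
      rw [dif_neg h]
      simpa using hm
    rw [tsum_eq_sum hz, Finset.sum_image (by
      intro a _ b _ hab
      exact Encodable.encode_injective hab)]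
    apply Finset.sum_le_sum
    intro i _
    have h : ∃ i' : ι, Encodable.encode i' = Encodable.encode i := ⟨i, rfl⟩
    have hch : h.choose = i := Encodable.encode_injective h.choose_spec
    rw [dif_pos h, hch]

lemma euclid_coord_le {n : ℕ} (p q : EuclideanSpace ℝ (Fin n)) (i : Fin n) :
    |p i - q i| ≤ dist p q := by
  rw [EuclideanSpace.dist_eq]
  have h1 : |p i - q i| = Real.sqrt (dist (p i) (q i)^2) := by
    rw [Real.sqrt_sq_eq_abs, Real.dist_eq, abs_abs]
  rw [h1]
  apply Real.sqrt_le_sqrt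
  apply Finset.single_le_sum (f := fun j => dist (p j) (q j)^2)
  · intro j _
    positivity
  · exact Finset.mem_univ i

lemma euclid_dist_le {n : ℕ} (hn : 1 ≤ n) (p q : EuclideanSpace ℝ (Fin n)) {L : ℝ} (hL : 0 ≤ L)
    (h : ∀ i, |p i - q i| ≤ L) : dist p q ≤ n * L := by
  rw [EuclideanSpace.dist_eq]
  have h1 : ∑ i, dist (p i) (q i)^2 ≤ (n:ℝ) * L^2 := by
    calc ∑ i, dist (p i) (q i)^2 ≤ ∑ _i : Fin n, L^2 := by
          apply Finset.sum_le_sum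
          intro i _
          have := h i
          rw [Real.dist_eq]
          nlinarith [abs_nonneg (p i - q i)]
      _ = (n:ℝ) * L^2 := by
          rw [Finset.sum_const, Finset.card_univ, Fintype.card_fin, nsmul_eq_mul]
  have hn1 : (1:ℝ) ≤ n := by exact_mod_cast hn
  calc Real.sqrt (∑ i, dist (p i) (q i)^2) ≤ Real.sqrt ((n:ℝ) * L^2) := Real.sqrt_le_sqrt h1
    _ ≤ Real.sqrt (((n:ℝ) * L)^2) := Real.sqrt_le_sqrt (by nlinarith)
    _ = (n:ℝ) * L := Real.sqrt_sq (by positivity)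

/-- choosing the basic scale -/
lemma exists_scale (c : ℝ) (hc : 0 < c) {r : ℝ≥0∞} (hr : 0 < r) :
    ∃ J : ℕ, 1 ≤ J ∧ ENNReal.ofReal (c * (1/2:ℝ)^J) ≤ r := by
  by_cases hrt : r = ⊤
  · exact ⟨1, le_rfl, by rw [hrt]; exact le_top⟩
  · have hrr : 0 < r.toReal := ENNReal.toReal_pos hr.ne' hrt
    obtain ⟨k, hk⟩ := exists_pow_lt_of_lt_one (div_pos hrr hc) (by norm_num : (1/2:ℝ) < 1)
    refine ⟨max k 1, le_max_right _ _, ?_⟩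
    have h1 : (1/2:ℝ)^(max k 1) ≤ (1/2:ℝ)^k :=
      pow_le_pow_of_le_one (by norm_num) (by norm_num) (le_max_left _ _)
    have h2 : c * (1/2:ℝ)^(max k 1) ≤ r.toReal := by
      rw [lt_div_iff₀ hc] at hk
      nlinarith
    calc ENNReal.ofReal (c * (1/2:ℝ)^(max k 1)) ≤ ENNReal.ofReal r.toReal :=
          ENNReal.ofReal_le_ofReal h2
      _ = r := ENNReal.ofReal_toReal hrt

/-! ### the countable decomposition into pieces -/

/-- the piece of Cantor space where the streams in `σ.some` positions are the given
eventually-constant sequences and all other streams are not eventually constant -/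
def piece (n : ℕ) (σ : Fin n → Option ↥D) : Set Cantor :=
  {x | ∀ i, (∀ s : ↥D, σ i = some s → str n i x = s.1) ∧ (σ i = none → str n i x ∉ D)}

instance countable_pieces (n : ℕ) : Countable (Fin n → Option ↥D) := by
  haveI : Countable ↥D := Set.countable_coe_iff.2 countable_D
  infer_instance

lemma iUnion_piece (n : ℕ) : (⋃ σ : Fin n → Option ↥D, piece n σ) = Set.univ := by
  classical
  apply Set.eq_univ_of_forall
  intro x
  refine Set.mem_iUnion.2 ⟨fun i => if h : str n i x ∈ D then some ⟨str n i x, h⟩ else none, ?_⟩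
  intro i
  simp only []
  constructor
  · intro s hs
    by_cases h : str n i x ∈ D
    · rw [dif_pos h] at hs
      have := Option.some_injective _ hs
      rw [← this]
    · rw [dif_neg h] at hs
      exact absurd hs (by simp)
  · intro hnone
    by_cases h : str n i x ∈ D
    · rw [dif_pos h] at hnone
      exact absurd hnone (by simp)
    · exact h

lemma apply_eq_str {n : ℕ} (hn : 1 ≤ n) (x : Cantor) (m : ℕ) :
    x m = str n ⟨m % n, Nat.mod_lt m hn⟩ x (m / n) := by
  show x m = x (n * (m / n) + m % n)
  congr 1
  exact (Nat.div_add_mod m n).symm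

lemma str_agree {n : ℕ} {x y : Cantor} {k : ℕ} (h : ∀ m, m < n*k → x m = y m) (i : Fin n) :
    ∀ q, q < k → str n i x q = str n i y q := by
  intro q hq
  apply h
  calc n*q + (i:ℕ) < n*q + n := by omega
    _ = n*(q+1) := by ring
    _ ≤ n*k := Nat.mul_le_mul_left n hq

lemma agree_of_str_agree {n : ℕ} (hn : 1 ≤ n) {x y : Cantor} {k : ℕ}
    (h : ∀ i : Fin n, ∀ q, q < k → str n i x q = str n i y q) :
    ∀ m, m < n*k → x m = y m := by
  intro m hm
  have hq : m / n < k := by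
    rw [Nat.div_lt_iff_lt_mul (by omega : 0 < n)]
    calc m < n * k := hm
      _ = k * n := Nat.mul_comm n k
  rw [apply_eq_str hn x m, apply_eq_str hn y m]
  exact h _ _ hq

/-! ### the forward direction -/

lemma pow_half_anti {a b : ℕ} (h : a ≤ b) : (1/2:ℝ)^b ≤ (1/2:ℝ)^a :=
  pow_le_pow_of_le_one (by norm_num) (by norm_num) h

lemma key_pow {n K m' : ℕ} (h : m' + n*n ≤ n*K) : ((n:ℝ)*(1/2)^K)^n ≤ (1/2:ℝ)^m' := by
  have h1 : ((n:ℝ)*(1/2)^K)^n = (n:ℝ)^n * (1/2)^(K*n) := by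
    rw [mul_pow, pow_mul]
  have h2 : (n:ℝ)^n ≤ (2:ℝ)^(n*n) := by
    calc (n:ℝ)^n ≤ ((2:ℝ)^n)^n := by
          apply pow_le_pow_left₀ (by positivity)
          exact_mod_cast (Nat.lt_two_pow_self (n := n)).le
      _ = (2:ℝ)^(n*n) := by rw [← pow_mul]
  have h3 : K*n = n*K := Nat.mul_comm K n
  have h4 : (2:ℝ)^(n*n) * (1/2)^(n*K) ≤ (1/2:ℝ)^m' := by
    have h5 : n*K = (n*K - n*n) + n*n := by omega
    rw [h5, pow_add]
    have h6 : (2:ℝ)^(n*n) * ((1/2)^(n*K - n*n) * (1/2)^(n*n))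
        = (1/2:ℝ)^(n*K - n*n) * ((1/2)^(n*n) * 2^(n*n)) := by ring
    rw [h6, ← mul_pow]
    norm_num
    exact pow_half_anti (by omega)
  calc ((n:ℝ)*(1/2)^K)^n = (n:ℝ)^n * (1/2)^(K*n) := h1
    _ ≤ (2:ℝ)^(n*n) * (1/2)^(n*K) := by
        rw [h3]
        apply mul_le_mul_of_nonneg_right h2 (by positivity)
    _ ≤ (1/2:ℝ)^m' := h4

lemma forward_null {n : ℕ} (hn : 1 ≤ n) {g : ℝ → ℝ} (hg : IsGauge g)
    (σ : Fin n → Option ↥D) (A : Set Cantor)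
    (h0 : gaugeMeasure g (A ∩ piece n σ) = 0) :
    gaugeMeasure (fun t => g (t ^ n)) (F n '' (A ∩ piece n σ)) = 0 := by
  classical
  have hnR : (0:ℝ) < n := by exact_mod_cast hn
  apply transfer_null (fun d => ENNReal.ofReal (g d.toReal))
    (fun d => ENNReal.ofReal (g (d.toReal ^ n)))
    (by simp [hg.zero])
    (A ∩ piece n σ) (F n '' (A ∩ piece n σ)) (fun U => F n '' (U ∩ piece n σ))
    ?_ ((2:ℝ≥0∞)^(n*n+n)) (by simp) ?_ h0
  · -- covering transfer
    rintro u hu P ⟨x, hx, rfl⟩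
    obtain ⟨k, hk⟩ := Set.mem_iUnion.1 (hu hx)
    exact Set.mem_iUnion.2 ⟨k, ⟨x, ⟨hk, hx.2⟩, rfl⟩⟩
  · -- the covering estimate
    intro r hr
    obtain ⟨J, hJ1, hJ2⟩ := exists_scale n hnR hr
    refine ⟨ENNReal.ofReal ((1/2:ℝ)^(n*J)), ENNReal.ofReal_pos.2 (by positivity), ?_⟩
    intro U hU
    by_cases hU0 : Metric.ediam U = 0
    · -- degenerate case : `U` is a subsingleton
      refine ⟨fun i => if i = 0 then F n '' (U ∩ piece n σ) else ∅, ?_, ?_, ?_⟩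
      · intro P hP
        exact Set.mem_iUnion.2 ⟨0, by simpa using hP⟩
      · intro i
        beta_reduce
        by_cases hi : i = 0
        · rw [hi, if_pos rfl]
          have hsub : (F n '' (U ∩ piece n σ)).Subsingleton :=
            ((Metric.ediam_eq_zero_iff.1 hU0).anti Set.inter_subset_left).image _
          rw [Metric.ediam_eq_zero_iff.2 hsub]
          exact zero_le
        · rw [if_neg hi]
          rw [Metric.ediam_empty]
          exact zero_le
      · have hz : ∀ i : ℕ, (fun d => ENNReal.ofReal (g (d.toReal ^ n)))
            (Metric.ediam (if i = 0 then F n '' (U ∩ piece n σ) else ∅)) = 0 := by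
          intro i
          have hdz : Metric.ediam (if i = 0 then F n '' (U ∩ piece n σ) else ∅) = 0 := by
            by_cases hi : i = 0
            · rw [hi, if_pos rfl]
              exact Metric.ediam_eq_zero_iff.2
                (((Metric.ediam_eq_zero_iff.1 hU0).anti Set.inter_subset_left).image _)
            · rw [if_neg hi]; exact Metric.ediam_empty
          rw [hdz]
          simp only [ENNReal.toReal_zero]
          rw [zero_pow (by omega : n ≠ 0), hg.zero]
          simp
        rw [ENNReal.tsum_eq_zero.2 hz]
        exact zero_le
    · -- main case
      have hUne : U.Nonempty := by
        rcases Set.eq_empty_or_nonempty U with h | h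
        · rw [h, Metric.ediam_empty] at hU0; exact absurd rfl hU0
        · exact h
      obtain ⟨x₀, hx₀⟩ := hUne
      have hUtop : Metric.ediam U ≠ ⊤ := (hU.trans_lt ENNReal.ofReal_lt_top).ne
      set dU := (Metric.ediam U).toReal with hdU
      have hdUpos : 0 < dU := ENNReal.toReal_pos hU0 hUtop
      have hdUle : dU ≤ (1/2:ℝ)^(n*J) := by
        have h1 := ENNReal.toReal_mono ENNReal.ofReal_ne_top hU
        rwa [ENNReal.toReal_ofReal (by positivity)] at h1
      have hex : ∃ k, (1/2:ℝ)^k ≤ dU := by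
        obtain ⟨k, hk⟩ := exists_pow_lt_of_lt_one hdUpos (by norm_num : (1/2:ℝ) < 1)
        exact ⟨k, hk.le⟩
      set m' := Nat.find hex with hm'def
      have hm'le : (1/2:ℝ)^m' ≤ dU := Nat.find_spec hex
      have hm'min : ∀ j, j < m' → dU < (1/2:ℝ)^j := fun j hj => not_le.1 (Nat.find_min hex hj)
      have hNm' : n*J ≤ m' := by
        by_contra hc
        push_neg at hc
        have h1 : (1/2:ℝ)^(n*J) ≤ (1/2:ℝ)^(m'+1) := pow_half_anti (by omega)
        have h2 : (1/2:ℝ)^(m'+1) < (1/2:ℝ)^m' := by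
          rw [pow_succ]
          nlinarith [pow_pos (by norm_num : (0:ℝ) < 1/2) m']
        linarith
      have hm'1 : 1 ≤ m' := le_trans (Nat.mul_le_mul hn hJ1) hNm'
      have hcyl : ∀ y ∈ U, ∀ j, j < m' → y j = x₀ j := by
        intro y hy
        have hd : dist y x₀ ≤ dU := by
          have h1 : edist y x₀ ≤ Metric.ediam U := EMetric.edist_le_diam_of_mem hy hx₀
          have h2 := ENNReal.toReal_mono hUtop h1
          rwa [← dist_edist] at h2
        have hlt : dist y x₀ < (1/2:ℝ)^(m'-1) :=
          lt_of_le_of_lt hd (hm'min (m'-1) (by omega))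
        have h3 := cantor_dist_gap hlt
        have hmm : m' - 1 + 1 = m' := by omega
        rw [hmm] at h3
        exact fun j hj => PiNat.mem_cylinder_iff.1 (PiNat.mem_cylinder_iff_dist_le.2 h3) j hj
      set K := (m' + n*n)/n + 1 with hKdef
      have hMeq : n*K = n*((m' + n*n)/n) + n := by rw [hKdef]; ring
      have hmod := Nat.div_add_mod (m' + n*n) n
      have hmod2 : (m' + n*n) % n < n := Nat.mod_lt _ (by omega)
      have hMlb : m' + n*n ≤ n*K := by omega
      have hMub : n*K ≤ m' + n*n + n := by omega
      have hKJ : J ≤ K := by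
        have h1 : n*J ≤ n*K := le_trans hNm' (by omega)
        exact Nat.le_of_mul_le_mul_left h1 (by omega)
      set q := n*K - m' with hqdef
      set T : (Fin q → Bool) → Set Cantor := fun e =>
        {y : Cantor | (∀ j, j < m' → y j = x₀ j) ∧ ∀ p : Fin q, y (m' + p) = e p} with hTdef
      obtain ⟨t, htU, htcases, htsum⟩ := exists_nat_family (fun e => F n '' (T e ∩ piece n σ))
      have hTdiam : ∀ e, Metric.ediam (F n '' (T e ∩ piece n σ))
          ≤ ENNReal.ofReal ((n:ℝ) * (1/2)^K) := by
        intro e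
        apply Metric.ediam_le
        rintro P ⟨x, hx, rfl⟩ Q ⟨y, hy, rfl⟩
        rw [edist_dist]
        apply ENNReal.ofReal_le_ofReal
        have hagree : ∀ m, m < n*K → x m = y m := by
          intro m hm
          by_cases hmm : m < m'
          · rw [hx.1.1 m hmm, ← hy.1.1 m hmm]
          · have hp : m - m' < q := by omega
            have h1 := hx.1.2 ⟨m - m', hp⟩
            have h2 := hy.1.2 ⟨m - m', hp⟩
            simp only [] at h1 h2
            have hmm2 : m' + (m - m') = m := by omega
            rw [hmm2] at h1 h2
            rw [h1, h2]
        apply euclid_dist_le hn _ _ (by positivity)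
        intro i
        rw [F_apply, F_apply]
        rcases hσ : σ i with _ | s
        · have hx2 := (hx.2 i).2 hσ
          have hy2 := (hy.2 i).2 hσ
          rw [phi_eq_of_not_mem hx2, phi_eq_of_not_mem hy2]
          exact abs_bval_sub_le (str_agree hagree i)
        · have hx2 := (hx.2 i).1 s hσ
          have hy2 := (hy.2 i).1 s hσ
          rw [hx2, hy2, sub_self, abs_zero]
          positivity
      refine ⟨t, ?_, ?_, ?_⟩
      · rw [htU]
        rintro P ⟨x, ⟨hxU, hxp⟩, rfl⟩
        refine Set.mem_iUnion.2 ⟨fun p => x (m' + p), ⟨x, ⟨⟨?_, ?_⟩, hxp⟩, rfl⟩⟩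
        · exact fun j hj => hcyl x hxU j hj
        · intro p; rfl
      · intro i
        rcases htcases i with h | ⟨e, he⟩
        · rw [h, Metric.ediam_empty]; exact zero_le
        · rw [he]
          refine le_trans (hTdiam e) (le_trans ?_ hJ2)
          apply ENNReal.ofReal_le_ofReal
          apply mul_le_mul_of_nonneg_left (pow_half_anti hKJ) (by positivity)
      · refine le_trans (htsum (fun d => ENNReal.ofReal (g (d.toReal ^ n))) (by
            show ENNReal.ofReal (g ((0:ℝ≥0∞).toReal ^ n)) = 0
            rw [ENNReal.toReal_zero, zero_pow (by omega : n ≠ 0), hg.zero]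
            simp)) ?_
        have hterm : ∀ e : Fin q → Bool,
            ENNReal.ofReal (g ((Metric.ediam (F n '' (T e ∩ piece n σ))).toReal ^ n))
            ≤ ENNReal.ofReal (g dU) := by
          intro e
          apply ENNReal.ofReal_le_ofReal
          have hd1 : (Metric.ediam (F n '' (T e ∩ piece n σ))).toReal ≤ (n:ℝ) * (1/2)^K := by
            have h1 := ENNReal.toReal_mono ENNReal.ofReal_ne_top (hTdiam e)
            rwa [ENNReal.toReal_ofReal (by positivity)] at h1
          have hd0 : 0 ≤ (Metric.ediam (F n '' (T e ∩ piece n σ))).toReal :=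
            ENNReal.toReal_nonneg
          have hp1 : (Metric.ediam (F n '' (T e ∩ piece n σ))).toReal ^ n
              ≤ ((n:ℝ) * (1/2)^K)^n := pow_le_pow_left₀ hd0 hd1 n
          have hp2 : ((n:ℝ) * (1/2)^K)^n ≤ (1/2:ℝ)^m' := key_pow hMlb
          exact gauge_mono hg (by positivity) (le_trans hp1 (hp2.trans hm'le))
        calc (∑ e : Fin q → Bool,
              ENNReal.ofReal (g ((Metric.ediam (F n '' (T e ∩ piece n σ))).toReal ^ n)))
            ≤ (Finset.univ : Finset (Fin q → Bool)).card • ENNReal.ofReal (g dU) :=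
              Finset.sum_le_card_nsmul _ _ _ (fun e _ => hterm e)
          _ = ((2^q : ℕ) : ℝ≥0∞) * ENNReal.ofReal (g dU) := by
              rw [nsmul_eq_mul, Finset.card_univ, Fintype.card_fun]
              norm_num
          _ ≤ (2:ℝ≥0∞)^(n*n+n) * ENNReal.ofReal (g dU) := by
              apply mul_le_mul_left
              rw [Nat.cast_pow]
              have h2 : ((2:ℕ):ℝ≥0∞) = 2 := by norm_num
              rw [h2]
              exact pow_le_pow_right₀ (by norm_num) (by omega)
          _ = (2:ℝ≥0∞)^(n*n+n) * (fun d => ENNReal.ofReal (g d.toReal)) (Metric.ediam U) := rfl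

/-! ### the backward direction -/

lemma backward_null {n : ℕ} (hn : 1 ≤ n) {g : ℝ → ℝ} (hg : IsGauge g)
    (σ : Fin n → Option ↥D) (A : Set Cantor)
    (h0 : gaugeMeasure (fun t => g (t ^ n)) (F n '' (A ∩ piece n σ)) = 0) :
    gaugeMeasure g (A ∩ piece n σ) = 0 := by
  classical
  apply transfer_null (fun d => ENNReal.ofReal (g (d.toReal ^ n)))
    (fun d => ENNReal.ofReal (g d.toReal))
    (by
      show ENNReal.ofReal (g ((0:ℝ≥0∞).toReal ^ n)) = 0
      rw [ENNReal.toReal_zero, zero_pow (by omega : n ≠ 0), hg.zero]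
      simp)
    (F n '' (A ∩ piece n σ)) (A ∩ piece n σ) (fun V => (F n ⁻¹' V) ∩ piece n σ)
    ?_ ((6:ℝ≥0∞)^n) (ENNReal.pow_ne_top (by norm_num)) ?_ h0
  · rintro u hu x hx
    have hFx : F n x ∈ ⋃ k, u k := hu ⟨x, hx, rfl⟩
    obtain ⟨k, hk⟩ := Set.mem_iUnion.1 hFx
    exact Set.mem_iUnion.2 ⟨k, ⟨hk, hx.2⟩⟩
  · intro r hr
    obtain ⟨N', hN1, hN2⟩ := exists_scale 1 one_pos hr
    rw [one_mul] at hN2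
    refine ⟨ENNReal.ofReal ((1/2:ℝ)^N'), ENNReal.ofReal_pos.2 (by positivity), ?_⟩
    intro V hV
    rcases Set.eq_empty_or_nonempty V with hVe | hVne
    · refine ⟨fun _ => ∅, ?_, ?_, ?_⟩
      · rw [hVe]
        simp
      · intro i
        rw [Metric.ediam_empty]
        exact zero_le
      · rw [ENNReal.tsum_eq_zero.2 (fun i => by
          rw [Metric.ediam_empty]
          show ENNReal.ofReal (g (0:ℝ≥0∞).toReal) = 0
          rw [ENNReal.toReal_zero, hg.zero]
          simp)]
        exact zero_le
    obtain ⟨p, hp⟩ := hVne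
    by_cases hV0 : Metric.ediam V = 0
    · -- subsingleton case
      refine ⟨fun i => if i = 0 then (F n ⁻¹' V) ∩ piece n σ else ∅, ?_, ?_, ?_⟩
      · intro x hx
        exact Set.mem_iUnion.2 ⟨0, by simpa using hx⟩
      · intro i
        beta_reduce
        have hsub : ((F n ⁻¹' V) ∩ piece n σ).Subsingleton := by
          intro x hx y hy
          apply F_injective n hn
          exact (Metric.ediam_eq_zero_iff.1 hV0) hx.1 hy.1
        by_cases hi : i = 0
        · rw [hi, if_pos rfl, Metric.ediam_eq_zero_iff.2 hsub]
          exact zero_le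
        · rw [if_neg hi, Metric.ediam_empty]
          exact zero_le
      · have hsub : ((F n ⁻¹' V) ∩ piece n σ).Subsingleton := by
          intro x hx y hy
          apply F_injective n hn
          exact (Metric.ediam_eq_zero_iff.1 hV0) hx.1 hy.1
        rw [ENNReal.tsum_eq_zero.2 (fun i => by
          have hdz : Metric.ediam (if i = 0 then (F n ⁻¹' V) ∩ piece n σ else ∅) = 0 := by
            by_cases hi : i = 0
            · rw [hi, if_pos rfl]
              exact Metric.ediam_eq_zero_iff.2 hsub
            · rw [if_neg hi]; exact Metric.ediam_empty
          rw [hdz]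
          show ENNReal.ofReal (g (0:ℝ≥0∞).toReal) = 0
          rw [ENNReal.toReal_zero, hg.zero]
          simp)]
        exact zero_le
    · -- main case
      have hVtop : Metric.ediam V ≠ ⊤ := (hV.trans_lt ENNReal.ofReal_lt_top).ne
      set dV := (Metric.ediam V).toReal with hdV
      have hdVpos : 0 < dV := ENNReal.toReal_pos hV0 hVtop
      have hdVle : dV ≤ (1/2:ℝ)^N' := by
        have h1 := ENNReal.toReal_mono ENNReal.ofReal_ne_top hV
        rwa [ENNReal.toReal_ofReal (by positivity)] at h1
      have hex : ∃ k, (1/2:ℝ)^k ≤ dV := by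
        obtain ⟨k, hk⟩ := exists_pow_lt_of_lt_one hdVpos (by norm_num : (1/2:ℝ) < 1)
        exact ⟨k, hk.le⟩
      set k := Nat.find hex with hkdef
      have hkle : (1/2:ℝ)^k ≤ dV := Nat.find_spec hex
      have hkmin : ∀ j, j < k → dV < (1/2:ℝ)^j := fun j hj => not_le.1 (Nat.find_min hex hj)
      have hkN : N' ≤ k := by
        by_contra hc
        push_neg at hc
        have h1 : (1/2:ℝ)^N' ≤ (1/2:ℝ)^(k+1) := pow_half_anti (by omega)
        have h2 : (1/2:ℝ)^(k+1) < (1/2:ℝ)^k := by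
          rw [pow_succ]
          nlinarith [pow_pos (by norm_num : (0:ℝ) < 1/2) k]
        linarith
      have hk1 : 1 ≤ k := le_trans hN1 hkN
      have hdV2 : dV < 2 * (1/2:ℝ)^k := by
        have h1 := hkmin (k-1) (by omega)
        have h2 : (1/2:ℝ)^(k-1) = 2 * (1/2:ℝ)^k := by
          have h3 : k = (k-1) + 1 := by omega
          calc (1/2:ℝ)^(k-1) = 2 * ((1/2:ℝ)^(k-1) * (1/2)) := by ring
            _ = 2 * (1/2:ℝ)^((k-1)+1) := by rw [pow_succ]
            _ = 2 * (1/2:ℝ)^k := by rw [← h3]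
        rw [h2] at h1
        exact h1
      -- the integer windows
      set base : Fin n → ℤ := fun i => match σ i with
        | some s => (pref s.1 k : ℤ)
        | none => ⌈(p i - dV) * 2^k⌉ - 1 with hbase
      have hwindow : ∀ x ∈ (F n ⁻¹' V) ∩ piece n σ, ∀ i : Fin n,
          base i ≤ (pref (str n i x) k : ℤ) ∧ (pref (str n i x) k : ℤ) ≤ base i + 5 := by
        intro x hx i
        rcases hσ : σ i with _ | s
        · -- none : use the value estimate
          have hxD := (hx.2 i).2 hσ
          have hbv : bval (str n i x) = F n x i := by
            rw [F_apply, phi_eq_of_not_mem hxD]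
          have hdist : |F n x i - p i| ≤ dV := by
            refine le_trans (euclid_coord_le _ _ i) ?_
            have h1 : edist (F n x) p ≤ Metric.ediam V := EMetric.edist_le_diam_of_mem hx.1 hp
            have h2 := ENNReal.toReal_mono hVtop h1
            rwa [← dist_edist] at h2
          obtain ⟨hb1, hb2⟩ := pref_bounds (str n i x) k
          have habs := abs_le.1 hdist
          have hpow : (0:ℝ) < 2^k := by positivity
          have hhalf : (1/2:ℝ)^k = (2^k)⁻¹ := by
            rw [one_div, inv_pow]
          rw [hhalf] at hb1 hb2 hkle hdV2
          have hbb : base i = ⌈(p i - dV) * 2^k⌉ - 1 := by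
            rw [hbase]
            simp [hσ]
          rw [hbb]
          constructor
          · -- lower bound
            have h1 : (p i - dV) * 2^k ≤ (pref (str n i x) k : ℝ) + 1 := by
              have h2 : p i - dV ≤ bval (str n i x) := by
                rw [hbv]; linarith
              have h3 : (p i - dV) * 2^k ≤ bval (str n i x) * 2^k :=
                mul_le_mul_of_nonneg_right h2 hpow.le
              have h4 : bval (str n i x) * 2^k ≤ (pref (str n i x) k : ℝ) + 1 := by
                have h5 : bval (str n i x) ≤ ((pref (str n i x) k : ℝ) + 1) * (2^k)⁻¹ := by
                  rw [add_mul, one_mul]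
                  linarith
                calc bval (str n i x) * 2^k ≤ (((pref (str n i x) k : ℝ) + 1) * (2^k)⁻¹) * 2^k :=
                      mul_le_mul_of_nonneg_right h5 hpow.le
                  _ = (pref (str n i x) k : ℝ) + 1 := by
                      field_simp
              linarith
            have h6 : ⌈(p i - dV) * 2^k⌉ ≤ (pref (str n i x) k : ℤ) + 1 := by
              rw [Int.ceil_le]
              push_cast
              exact h1
            omega
          · -- upper bound
            have h1 : (pref (str n i x) k : ℝ) ≤ (p i - dV) * 2^k + 4 := by
              have h2 : bval (str n i x) ≤ p i + dV := by
                rw [hbv]; linarith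
              have h3 : (pref (str n i x) k : ℝ) * (2^k)⁻¹ ≤ p i + dV := le_trans hb1 h2
              have h4 : (pref (str n i x) k : ℝ) ≤ (p i + dV) * 2^k := by
                calc (pref (str n i x) k : ℝ) = ((pref (str n i x) k : ℝ) * (2^k)⁻¹) * 2^k := by
                      field_simp
                  _ ≤ (p i + dV) * 2^k := mul_le_mul_of_nonneg_right h3 hpow.le
              have h5 : dV * 2^k < 2 := by
                have h6 : dV < 2 * (2^k)⁻¹ := hdV2
                calc dV * 2^k < (2 * (2^k)⁻¹) * 2^k := mul_lt_mul_of_pos_right h6 hpow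
                  _ = 2 := by field_simp
              nlinarith
            have h6 : ((p i - dV) * 2^k : ℝ) ≤ (⌈(p i - dV) * 2^k⌉ : ℝ) := Int.le_ceil _
            have h7 : (pref (str n i x) k : ℝ) ≤ (⌈(p i - dV) * 2^k⌉ : ℝ) + 4 := by linarith
            have h8 : (pref (str n i x) k : ℤ) ≤ ⌈(p i - dV) * 2^k⌉ + 4 := by
              exact_mod_cast h7
            omega
        · -- some : the stream is fixed
          have hxs := (hx.2 i).1 s hσ
          have hbb : base i = (pref s.1 k : ℤ) := by
            rw [hbase]
            simp [hσ]
          rw [hbb, hxs]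
          omega
      -- the cylinder family
      set T : (Fin n → Fin 6) → Set Cantor :=
        fun o => {x : Cantor | ∀ i : Fin n, (pref (str n i x) k : ℤ) = base i + (o i : ℕ)} with hTdef
      obtain ⟨t, htU, htcases, htsum⟩ := exists_nat_family T
      have hTdiam : ∀ o, Metric.ediam (T o) ≤ ENNReal.ofReal ((1/2:ℝ)^(n*k)) := by
        intro o
        apply Metric.ediam_le
        intro x hx y hy
        rw [edist_dist]
        apply ENNReal.ofReal_le_ofReal
        apply cantor_dist_le_of_agree
        apply agree_of_str_agree hn
        intro i qq hqq
        have h1 : (pref (str n i x) k : ℤ) = (pref (str n i y) k : ℤ) := by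
          rw [hx i, hy i]
        have h2 : pref (str n i x) k = pref (str n i y) k := by exact_mod_cast h1
        exact pref_inj h2 qq hqq
      refine ⟨t, ?_, ?_, ?_⟩
      · rw [htU]
        intro x hx
        have hw := hwindow x hx
        refine Set.mem_iUnion.2 ⟨fun i => ⟨((pref (str n i x) k : ℤ) - base i).toNat, ?_⟩, ?_⟩
        · obtain ⟨h1, h2⟩ := hw i
          omega
        · intro i
          obtain ⟨h1, h2⟩ := hw i
          simp only []
          omega
      · intro i
        rcases htcases i with h | ⟨o, ho⟩
        · rw [h, Metric.ediam_empty]; exact zero_le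
        · rw [ho]
          refine le_trans (hTdiam o) (le_trans ?_ hN2)
          apply ENNReal.ofReal_le_ofReal
          apply pow_half_anti
          calc N' ≤ k := hkN
            _ ≤ n*k := Nat.le_mul_of_pos_left k (by omega)
      · refine le_trans (htsum (fun d => ENNReal.ofReal (g d.toReal)) (by
            show ENNReal.ofReal (g (0:ℝ≥0∞).toReal) = 0
            rw [ENNReal.toReal_zero, hg.zero]
            simp)) ?_
        have hterm : ∀ o : Fin n → Fin 6,
            ENNReal.ofReal (g ((Metric.ediam (T o)).toReal)) ≤ ENNReal.ofReal (g (dV ^ n)) := by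
          intro o
          apply ENNReal.ofReal_le_ofReal
          have hd1 : (Metric.ediam (T o)).toReal ≤ (1/2:ℝ)^(n*k) := by
            have h1 := ENNReal.toReal_mono ENNReal.ofReal_ne_top (hTdiam o)
            rwa [ENNReal.toReal_ofReal (by positivity)] at h1
          have hd2 : (1/2:ℝ)^(n*k) ≤ dV^n := by
            rw [mul_comm n k, pow_mul]
            exact pow_le_pow_left₀ (by positivity) hkle n
          exact gauge_mono hg ENNReal.toReal_nonneg (le_trans hd1 hd2)
        calc (∑ o : Fin n → Fin 6, ENNReal.ofReal (g ((Metric.ediam (T o)).toReal)))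
            ≤ (Finset.univ : Finset (Fin n → Fin 6)).card • ENNReal.ofReal (g (dV ^ n)) :=
              Finset.sum_le_card_nsmul _ _ _ (fun o _ => hterm o)
          _ = ((6^n : ℕ) : ℝ≥0∞) * ENNReal.ofReal (g (dV ^ n)) := by
              rw [nsmul_eq_mul, Finset.card_univ, Fintype.card_fun]
              norm_num
          _ ≤ (6:ℝ≥0∞)^n * ENNReal.ofReal (g (dV ^ n)) := by
              apply mul_le_mul_left
              rw [Nat.cast_pow]
              have h2 : ((6:ℕ):ℝ≥0∞) = 6 := by norm_num
              rw [h2]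
          _ = (6:ℝ≥0∞)^n * (fun d => ENNReal.ofReal (g (d.toReal ^ n))) (Metric.ediam V) := rfl

lemma A_decomp {n : ℕ} (A : Set Cantor) :
    A = ⋃ σ : Fin n → Option ↥D, (A ∩ piece n σ) := by
  rw [← Set.inter_iUnion, iUnion_piece, Set.inter_univ]

lemma null_iff {n : ℕ} (hn : 1 ≤ n) {g : ℝ → ℝ} (hg : IsGauge g) (A : Set Cantor) :
    gaugeMeasure g A = 0 ↔ gaugeMeasure (fun t => g (t ^ n)) (F n '' A) = 0 := by
  constructor
  · intro h
    have himg : F n '' A = ⋃ σ : Fin n → Option ↥D, F n '' (A ∩ piece n σ) := by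
      conv_lhs => rw [A_decomp (n := n) A]
      rw [Set.image_iUnion]
    rw [himg, measure_iUnion_null_iff]
    intro σ
    apply forward_null hn hg
    exact measure_mono_null Set.inter_subset_left h
  · intro h
    conv_lhs => rw [A_decomp (n := n) A]
    rw [measure_iUnion_null_iff]
    intro σ
    apply backward_null hn hg
    exact measure_mono_null (Set.image_mono Set.inter_subset_left) h

end CC

/-- For every `n ≥ 1` there is a Borel bijection `f : 2^ω → [0,1]^n` such that for every set
`A ⊆ 2^ω` and every gauge function `g`, `H^g(A) > 0` iff `H^{g∘h⁻¹}(f(A)) > 0`, where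
`h(t) = t^{1/n}`, so that `g ∘ h⁻¹ (t) = g (t^n)`. -/
theorem exists_borel_bijection_cantor_cube (n : ℕ) (hn : 1 ≤ n) :
    ∃ f : Cantor → EuclideanSpace ℝ (Fin n),
      Measurable f ∧ Function.Injective f ∧ Set.range f = unitCube n ∧
      ∀ g : ℝ → ℝ, IsGauge g → ∀ A : Set Cantor,
        (0 < gaugeMeasure g A ↔ 0 < gaugeMeasure (fun t => g (t ^ n)) (f '' A)) := by
  refine ⟨CC.F n, CC.measurable_F n, CC.F_injective n hn, ?_, ?_⟩
  · rw [CC.range_F n hn]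
    rfl
  · intro g hg A
    rw [pos_iff_ne_zero, pos_iff_ne_zero]
    exact not_iff_not.2 (CC.null_iff hn hg A)
end
end
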